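/- arXiv:1206.0326 — 6 statements merged into one kernel-verified Lean document; each statement's English description precedes it below -/
import Mathlib

section
/- For a field F and finite-dimensional commutative F-algebras R and S over a perfect field F of characteristic p, the ratio dim(R⊗S)^(p)/dim(R⊗S) equals (dim R^(p)/dim R)·(dim S^(p)/dim S); equivalently, dim((R⊗_F S)^(p)) = dim(R^(p)) · dim(S^(p)). -/
open Pointwise

/-- `pw x n` is the `n`-th power of `x` in any magma, for `n ≥ 1`
(with the junk value `pw x 0 = x`). -/
def pw {R : Type*} [Mul R] (x : R) : ℕ → R
  | 0 => x
  | 1 => x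
  | n + 2 => x * pw x (n + 1)

lemma pw_succ_succ {R : Type*} [Mul R] (x : R) (n : ℕ) :
    pw x (n + 2) = x * pw x (n + 1) := rfl

lemma pw_map {M N : Type*} [Mul M] [Mul N] (f : M → N)
    (hf : ∀ a b, f (a * b) = f a * f b) (x : M) : ∀ n, f (pw x n) = pw (f x) n
  | 0 => rfl
  | 1 => rfl
  | n + 2 => by
    rw [pw_succ_succ, hf, pw_map f hf x (n + 1), pw_succ_succ]

lemma pw_eq_pow {M : Type*} [Monoid M] (x : M) : ∀ n, n ≠ 0 → pw x n = x ^ n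
  | 1, _ => (pow_one x).symm
  | n + 2, _ => by
    rw [pw_succ_succ, pw_eq_pow x (n + 1) (Nat.succ_ne_zero n), ← pow_succ']

section helpers

variable {F : Type*} [Field F] {p : ℕ} [Fact p.Prime] [CharP F p]
variable {R : Type*} [NonUnitalCommRing R] [Module F R] [SMulCommClass F R R]
  [IsScalarTower F R R]

lemma inr_pw (x : R) (n : ℕ) (hn : n ≠ 0) :
    (↑(pw x n) : Unitization F R) = (↑x : Unitization F R) ^ n := by
  rw [pw_map ((↑) : R → Unitization F R) (fun a b => Unitization.inr_mul F a b) x n,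
    pw_eq_pow _ n hn]

instance : CharP (Unitization F R) p :=
  charP_of_injective_algebraMap (by rw [Unitization.algebraMap_eq_inl]; exact Unitization.inl_injective) p

include F in
lemma pw_add (x y : R) : pw (x + y) p = pw x p + pw y p := by
  have hp : p ≠ 0 := (Fact.out : p.Prime).ne_zero
  apply Unitization.inr_injective (R := F)
  show (↑(pw (x + y) p) : Unitization F R) = ↑(pw x p + pw y p)
  rw [Unitization.inr_add, inr_pw _ _ hp, inr_pw _ _ hp, inr_pw _ _ hp, Unitization.inr_add,
    add_pow_char]

include F in
lemma pw_smul' (a : F) (x : R) : pw (a • x) p = a ^ p • pw x p := by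
  have hp : p ≠ 0 := (Fact.out : p.Prime).ne_zero
  apply Unitization.inr_injective (R := F)
  show (↑(pw (a • x) p) : Unitization F R) = ↑(a ^ p • pw x p)
  rw [Unitization.inr_smul, inr_pw _ _ hp, inr_pw _ _ hp, Unitization.inr_smul, smul_pow]

include F in
lemma pw_zero' : pw (0 : R) p = 0 := by
  have hp : p ≠ 0 := (Fact.out : p.Prime).ne_zero
  apply Unitization.inr_injective (R := F)
  show (↑(pw (0 : R) p) : Unitization F R) = ↑(0 : R)
  rw [inr_pw _ _ hp, Unitization.inr_zero, zero_pow hp]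

end helpers

open TensorProduct in
noncomputable instance instNonUnitalCommRingTensor {F R S : Type*} [Field F]
    [NonUnitalCommRing R] [Module F R] [SMulCommClass F R R] [IsScalarTower F R R]
    [NonUnitalCommRing S] [Module F S] [SMulCommClass F S S] [IsScalarTower F S S] :
    NonUnitalCommRing (R ⊗[F] S) :=
  { (inferInstance : NonUnitalRing (R ⊗[F] S)) with
    mul_comm := fun x y => by
      induction x with
      | zero => rw [zero_mul, mul_zero]
      | tmul a b =>
        induction y with
        | zero => rw [zero_mul, mul_zero]
        | tmul c d =>
          rw [Algebra.TensorProduct.tmul_mul_tmul, Algebra.TensorProduct.tmul_mul_tmul,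
            mul_comm a c, mul_comm b d]
        | add u v ihu ihv => rw [mul_add, add_mul, ihu, ihv]
      | add u v ihu ihv => rw [add_mul, mul_add, ihu, ihv] }

/-- The set of `p`-th powers as a submodule (using perfectness of `F`). -/
def pSub (F : Type*) [Field F] (p : ℕ) [Fact p.Prime] [CharP F p]
    (hperf : ∀ a : F, ∃ b : F, b ^ p = a)
    (R : Type*) [NonUnitalCommRing R] [Module F R] [SMulCommClass F R R]
    [IsScalarTower F R R] : Submodule F R where
  carrier := Set.range fun x : R => pw x p
  add_mem' := by rintro _ _ ⟨x, rfl⟩ ⟨y, rfl⟩; exact ⟨x + y, pw_add (F := F) x y⟩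
  zero_mem' := ⟨0, pw_zero' (F := F)⟩
  smul_mem' a := by
    rintro _ ⟨x, rfl⟩
    obtain ⟨b, hb⟩ := hperf a
    exact ⟨b • x, by show pw (b • x) p = a • pw x p; rw [pw_smul' (F := F), hb]⟩

lemma mem_pSub {F : Type*} [Field F] {p : ℕ} [Fact p.Prime] [CharP F p]
    {hperf : ∀ a : F, ∃ b : F, b ^ p = a}
    {R : Type*} [NonUnitalCommRing R] [Module F R] [SMulCommClass F R R]
    [IsScalarTower F R R] {x : R} :
    x ∈ pSub F p hperf R ↔ ∃ y : R, pw y p = x := Iff.rfl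

lemma span_range_pw (F : Type*) [Field F] (p : ℕ) [Fact p.Prime] [CharP F p]
    (hperf : ∀ a : F, ∃ b : F, b ^ p = a)
    (R : Type*) [NonUnitalCommRing R] [Module F R] [SMulCommClass F R R]
    [IsScalarTower F R R] :
    Submodule.span F (Set.range fun x : R => pw x p) = pSub F p hperf R := by
  have h : (Set.range fun x : R => pw x p) = ↑(pSub F p hperf R) := rfl
  rw [h, Submodule.span_eq]

open TensorProduct in
lemma pw_tmul {F : Type*} [Field F]
    {R S : Type*} [NonUnitalCommRing R] [Module F R] [SMulCommClass F R R] [IsScalarTower F R R]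
    [NonUnitalCommRing S] [Module F S] [SMulCommClass F S S] [IsScalarTower F S S]
    (r : R) (s : S) : ∀ n, pw (r ⊗ₜ[F] s) n = pw r n ⊗ₜ[F] pw s n
  | 0 => rfl
  | 1 => rfl
  | n + 2 => by
    rw [pw_succ_succ, pw_tmul r s (n + 1), pw_succ_succ, pw_succ_succ,
      Algebra.TensorProduct.tmul_mul_tmul]

open TensorProduct in
theorem stmt_7 {F R S : Type*} [Field F] (p : ℕ) (hp : p.Prime) [CharP F p]
    (hperf : ∀ a : F, ∃ b : F, b ^ p = a)
    [NonUnitalCommRing R] [Module F R] [SMulCommClass F R R] [IsScalarTower F R R]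
    [FiniteDimensional F R]
    [NonUnitalCommRing S] [Module F S] [SMulCommClass F S S] [IsScalarTower F S S]
    [FiniteDimensional F S] :
    Module.finrank F (Submodule.span F (Set.range fun t : R ⊗[F] S => pw t p))
      = Module.finrank F (Submodule.span F (Set.range fun x : R => pw x p)) *
        Module.finrank F (Submodule.span F (Set.range fun y : S => pw y p)) := by
  haveI := Fact.mk hp
  set A := pSub F p hperf R with hA
  set B := pSub F p hperf S with hB
  set C := pSub F p hperf (R ⊗[F] S) with hCdef
  rw [span_range_pw F p hperf (R ⊗[F] S), span_range_pw F p hperf R, span_range_pw F p hperf S,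
    ← hA, ← hB, ← hCdef]
  have hC : C = LinearMap.range (TensorProduct.map A.subtype B.subtype) := by
    apply le_antisymm
    · intro t ht
      obtain ⟨u, rfl⟩ := mem_pSub.mp ht
      induction u with
      | zero =>
        rw [pw_zero' (F := F)]
        exact Submodule.zero_mem _
      | tmul r s =>
        refine ⟨(⟨pw r p, ⟨r, rfl⟩⟩ : A) ⊗ₜ[F] (⟨pw s p, ⟨s, rfl⟩⟩ : B), ?_⟩
        rw [TensorProduct.map_tmul, pw_tmul]
        rfl
      | add u v ihu ihv =>
        rw [pw_add (F := F)]
        exact Submodule.add_mem _ (ihu (mem_pSub.mpr ⟨u, rfl⟩)) (ihv (mem_pSub.mpr ⟨v, rfl⟩))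
    · rw [TensorProduct.range_map_eq_span_tmul, Submodule.span_le]
      rintro _ ⟨m, n, rfl⟩
      obtain ⟨r, hr⟩ := mem_pSub.mp m.2
      obtain ⟨s, hs⟩ := mem_pSub.mp n.2
      refine mem_pSub.mpr ⟨r ⊗ₜ[F] s, ?_⟩
      rw [pw_tmul]
      simp only [Submodule.coe_subtype]
      rw [hr, hs]
  have hinj : Function.Injective (TensorProduct.map A.subtype B.subtype) := by
    rw [← LinearMap.lTensor_comp_rTensor]
    exact (Module.Flat.lTensor_preserves_injective_linearMap _ B.injective_subtype).comp
      (Module.Flat.rTensor_preserves_injective_linearMap _ A.injective_subtype)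
  rw [hC, LinearMap.finrank_range_of_inj hinj, Module.finrank_tensorProduct]
end

section
/- Let F be a field and d ≥ 1. Let R be the associative F-algebra presented by generators x, y, z_1, ..., z_{d-1} of degree 1, with relations xx = yy = 0 and all degree-3 monomials in the generators not containing the substring xy equal to 0. Then for every odd n > 2, the homogeneous component R_n has dimension 2d, and for every even n > 2, R_n has dimension d^2 + 1. -/
noncomputable section

variable (F : Type*) [Field F] (d : ℕ)

/-- The generators `x = gen 0`, `y = gen 1`, `z_i = gen (i+1)` of the free algebra. -/
def gen (i : Fin (d + 1)) : FreeAlgebra F (Fin (d + 1)) := FreeAlgebra.ι F i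

/-- The relators: `xx`, `yy`, and every product of three generators not containing
the consecutive substring `xy`. -/
def relSet : Set (FreeAlgebra F (Fin (d + 1))) :=
  {gen F d 0 * gen F d 0, gen F d 1 * gen F d 1} ∪
    {w | ∃ a b c : Fin (d + 1), w = gen F d a * gen F d b * gen F d c ∧
        ¬((a = 0 ∧ b = 1) ∨ (b = 0 ∧ c = 1))}

/-- The relation setting each relator equal to `0`. -/
def rel : FreeAlgebra F (Fin (d + 1)) → FreeAlgebra F (Fin (d + 1)) → Prop :=
  fun u v => u ∈ relSet F d ∧ v = 0

/-- The presented algebra `R`. -/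
abbrev Ralg := RingQuot (rel F d)

/-- The projection onto the presented algebra. -/
def proj : FreeAlgebra F (Fin (d + 1)) →ₐ[F] Ralg F d := RingQuot.mkAlgHom F (rel F d)

/-- The degree-`n` homogeneous component of `R`: the span of the images of all
words of length `n` in the generators. -/
def comp (n : ℕ) : Submodule F (Ralg F d) :=
  Submodule.span F
    (Set.range fun w : Fin n → Fin (d + 1) =>
      proj F d (List.ofFn fun j => gen F d (w j)).prod)

namespace Stmt8Aux

def pairOk (a b : Fin (d + 1)) : Prop := ¬(a = 0 ∧ b = 0) ∧ ¬(a = 1 ∧ b = 1)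

def tripOk (a b c : Fin (d + 1)) : Prop := (a = 0 ∧ b = 1) ∨ (b = 0 ∧ c = 1)

def good : List (Fin (d + 1)) → Prop
  | a :: b :: c :: l => pairOk d a b ∧ tripOk d a b c ∧ good (b :: c :: l)
  | [a, b] => pairOk d a b
  | _ => True

lemma good_nil : good d [] := trivial

lemma good_singleton (a : Fin (d + 1)) : good d [a] := trivial

lemma good_pair (a b : Fin (d + 1)) : good d [a, b] ↔ pairOk d a b := Iff.rfl

lemma good_cons3 (a b c : Fin (d + 1)) (l : List (Fin (d + 1))) :
    good d (a :: b :: c :: l) ↔ pairOk d a b ∧ tripOk d a b c ∧ good d (b :: c :: l) := Iff.rfl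

instance pairOkDec (a b : Fin (d + 1)) : Decidable (pairOk d a b) := by
  unfold pairOk; infer_instance

instance tripOkDec (a b c : Fin (d + 1)) : Decidable (tripOk d a b c) := by
  unfold tripOk; infer_instance

instance goodDec : ∀ l : List (Fin (d + 1)), Decidable (good d l)
  | [] => .isTrue trivial
  | [_] => .isTrue trivial
  | [a, b] => inferInstanceAs (Decidable (pairOk d a b))
  | a :: b :: c :: l =>
    letI := goodDec (b :: c :: l)
    inferInstanceAs (Decidable (pairOk d a b ∧ tripOk d a b c ∧ good d (b :: c :: l)))

lemma good_tail {a : Fin (d + 1)} : ∀ {t : List (Fin (d + 1))}, good d (a :: t) → good d t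
  | [], _ => trivial
  | [_], _ => trivial
  | _ :: _ :: _, h => h.2.2

lemma not_good_xx (m : List (Fin (d + 1))) : ¬ good d (0 :: 0 :: m) := by
  cases m with
  | nil => exact fun h => h.1 ⟨rfl, rfl⟩
  | cons c t => exact fun h => h.1.1 ⟨rfl, rfl⟩

lemma not_good_yy (m : List (Fin (d + 1))) : ¬ good d (1 :: 1 :: m) := by
  cases m with
  | nil => exact fun h => h.2 ⟨rfl, rfl⟩
  | cons c t => exact fun h => h.1.2 ⟨rfl, rfl⟩

lemma not_good_trip {a b c : Fin (d + 1)} (h : ¬ tripOk d a b c) (m : List (Fin (d + 1))) :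
    ¬ good d (a :: b :: c :: m) := fun hg => h hg.2.1

/-- the word `(xy)^m` -/
def xyw : ℕ → List (Fin (d + 1))
  | 0 => []
  | m + 1 => 0 :: 1 :: xyw m

@[simp] lemma xyw_succ (m : ℕ) : xyw d (m + 1) = 0 :: 1 :: xyw d m := rfl

@[simp] lemma xyw_length (m : ℕ) : (xyw d m).length = 2 * m := by
  induction m with
  | zero => rfl
  | succ m ih => simp [xyw, ih]; omega

section
variable (h01 : (0 : Fin (d + 1)) ≠ 1)
include h01

lemma pairOk_01 : pairOk d 0 1 := ⟨fun h => h01 h.2.symm, fun h => h01 h.1⟩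
lemma pairOk_10 : pairOk d 1 0 := ⟨fun h => h01 h.1.symm, fun h => h01 h.2⟩
lemma pairOk_left {a : Fin (d + 1)} (ha : a ≠ 0) : pairOk d a 0 :=
  ⟨fun h => ha h.1, fun h => h01 h.2⟩
lemma pairOk_right {c : Fin (d + 1)} (hc : c ≠ 1) : pairOk d 1 c :=
  ⟨fun h => h01 h.1.symm, fun h => hc h.2⟩

omit h01 in
lemma tripOk_xy_left (c : Fin (d + 1)) : tripOk d 0 1 c := Or.inl ⟨rfl, rfl⟩
omit h01 in
lemma tripOk_xy_right (a : Fin (d + 1)) : tripOk d a 0 1 := Or.inr ⟨rfl, rfl⟩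

lemma good_L1 : good d [0, 1] := pairOk_01 d h01

lemma good_L2 {c : Fin (d + 1)} (hc : c ≠ 1) : good d [0, 1, c] :=
  ⟨pairOk_01 d h01, tripOk_xy_left d c, pairOk_right d h01 hc⟩

lemma good_L3 {s : List (Fin (d + 1))} (h : good d (0 :: 1 :: s)) :
    good d (0 :: 1 :: 0 :: 1 :: s) :=
  ⟨pairOk_01 d h01, tripOk_xy_left d 0, pairOk_10 d h01, Or.inr ⟨rfl, rfl⟩, h⟩

lemma good_L4 {a : Fin (d + 1)} (ha : a ≠ 0) {s : List (Fin (d + 1))}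
    (h : good d (0 :: 1 :: s)) : good d (a :: 0 :: 1 :: s) :=
  ⟨pairOk_left d h01 ha, tripOk_xy_right d a, h⟩

lemma good_01xy : ∀ m, good d (0 :: 1 :: xyw d m)
  | 0 => good_L1 d h01
  | m + 1 => good_L3 d h01 (good_01xy m)

lemma good_xy (m : ℕ) : good d (xyw d m) := by
  cases m with
  | zero => trivial
  | succ m => exact good_01xy d h01 m

lemma good_01xyc {c : Fin (d + 1)} (hc : c ≠ 1) : ∀ m, good d (0 :: 1 :: (xyw d m ++ [c]))
  | 0 => good_L2 d h01 hc
  | m + 1 => good_L3 d h01 (good_01xyc hc m)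

lemma good_A (m : ℕ) {c : Fin (d + 1)} (hc : c ≠ 1) : good d (xyw d (m + 1) ++ [c]) :=
  good_01xyc d h01 hc m

lemma good_B (m : ℕ) {a : Fin (d + 1)} (ha : a ≠ 0) : good d (a :: xyw d (m + 1)) :=
  good_L4 d h01 ha (good_01xy d h01 m)

lemma good_C (m : ℕ) {a b : Fin (d + 1)} (ha : a ≠ 0) (hb : b ≠ 1) :
    good d (a :: (xyw d (m + 1) ++ [b])) :=
  good_L4 d h01 ha (good_01xyc d h01 hb m)

end


section
variable (h01 : (0 : Fin (d + 1)) ≠ 1)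
include h01

lemma classify : ∀ (t : List (Fin (d + 1))) (a b c : Fin (d + 1)),
    good d (a :: b :: c :: t) →
    (∃ m c', c' ≠ 1 ∧ a :: b :: c :: t = xyw d (m + 1) ++ [c']) ∨
    (∃ m a', a' ≠ 0 ∧ a :: b :: c :: t = a' :: xyw d (m + 1)) ∨
    (∃ m a' b', a' ≠ 0 ∧ b' ≠ 1 ∧ a :: b :: c :: t = a' :: (xyw d (m + 1) ++ [b'])) ∨
    (∃ m, a :: b :: c :: t = xyw d (m + 2)) := by
  intro t
  induction t with
  | nil =>
    intro a b c h
    obtain ⟨h1, h2, h3⟩ := h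
    rcases h2 with ⟨rfl, rfl⟩ | ⟨rfl, rfl⟩
    · -- a = 0, b = 1 : word [0, 1, c], pairOk 1 c gives c ≠ 1
      refine Or.inl ⟨0, c, fun hc => h3.2 ⟨rfl, hc⟩, ?_⟩
      simp [xyw]
    · -- b = 0, c = 1 : word [a, 0, 1], pairOk a 0 gives a ≠ 0
      refine Or.inr (Or.inl ⟨0, a, fun ha => h1.1 ⟨ha, rfl⟩, ?_⟩)
      simp [xyw]
  | cons x t' ih =>
    intro a b c h
    obtain ⟨h1, h2, h3⟩ := h
    rcases ih b c x h3 with ⟨m, c', hc', he⟩ | ⟨m, a', ha', he⟩ |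
      ⟨m, a', b', ha', hb', he⟩ | ⟨m, he⟩
    · -- tail = xyw (m+1) ++ [c']  (so b = 0, c = 1)
      rw [xyw_succ] at he
      obtain ⟨rfl, rfl, -⟩ : b = 0 ∧ c = 1 ∧ x :: t' = xyw d m ++ [c'] := by
        simpa using he
      have ha : a ≠ 0 := fun h0 => h1.1 ⟨h0, rfl⟩
      exact Or.inr (Or.inr (Or.inl ⟨m, a, c', ha, hc', by simp [he, xyw_succ]⟩))
    · -- tail = a' :: xyw (m+1)  (so b = a', c = 0, x = 1)
      rw [xyw_succ] at he
      obtain ⟨rfl, rfl, rfl, rfl⟩ : b = a' ∧ c = 0 ∧ x = 1 ∧ t' = xyw d m := by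
        simpa using he
      rcases h2 with ⟨rfl, rfl⟩ | ⟨h0, h1'⟩
      · exact Or.inr (Or.inr (Or.inr ⟨m, rfl⟩))
      · exact absurd h1' h01
    · -- tail = a' :: (xyw (m+1) ++ [b'])  (so b = a', c = 0, x = 1)
      rw [xyw_succ] at he
      obtain ⟨rfl, rfl, rfl, rfl⟩ :
          b = a' ∧ c = 0 ∧ x = 1 ∧ t' = xyw d m ++ [b'] := by
        simpa using he
      rcases h2 with ⟨rfl, rfl⟩ | ⟨h0, h1'⟩
      · exact Or.inl ⟨m + 1, b', hb', rfl⟩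
      · exact absurd h1' h01
    · -- tail = xyw (m+2)  (so b = 0, c = 1)
      rw [xyw_succ] at he
      obtain ⟨rfl, rfl, -⟩ : b = 0 ∧ c = 1 ∧ x :: t' = xyw d (m + 1) := by
        simpa using he
      have ha : a ≠ 0 := fun h0 => h1.1 ⟨h0, rfl⟩
      exact Or.inr (Or.inl ⟨m + 1, a, ha, by simp [he, xyw_succ]⟩)

end

end Stmt8Aux

namespace Stmt8Aux

/-- image in `R` of the word `l`. -/
def wp (l : List (Fin (d + 1))) : Ralg F d := proj F d ((l.map (gen F d)).prod)

lemma wp_nil : wp F d [] = 1 := by simp [wp]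

lemma wp_cons (a : Fin (d + 1)) (l : List (Fin (d + 1))) :
    wp F d (a :: l) = proj F d (gen F d a) * wp F d l := by
  simp [wp]

lemma wp_append (l₁ l₂ : List (Fin (d + 1))) :
    wp F d (l₁ ++ l₂) = wp F d l₁ * wp F d l₂ := by
  simp [wp]

lemma proj_relSet {u : FreeAlgebra F (Fin (d + 1))} (hu : u ∈ relSet F d) :
    proj F d u = 0 := by
  have h : rel F d u 0 := ⟨hu, rfl⟩
  have h2 := RingQuot.mkAlgHom_rel F h
  simpa [proj] using h2

lemma wp_bad : ∀ l : List (Fin (d + 1)), ¬ good d l → wp F d l = 0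
  | [], h => absurd trivial h
  | [a], h => absurd trivial h
  | [a, b], h => by
    have hp : (a = 0 ∧ b = 0) ∨ (a = 1 ∧ b = 1) := by
      by_contra hc
      push_neg at hc
      exact h ⟨fun hab => hc.1 hab.1 hab.2, fun hab => hc.2 hab.1 hab.2⟩
    have : wp F d [a, b] = proj F d (gen F d a * gen F d b) := by
      simp [wp]
    rw [this]
    rcases hp with ⟨rfl, rfl⟩ | ⟨rfl, rfl⟩
    · exact proj_relSet F d (Or.inl (Or.inl rfl))
    · exact proj_relSet F d (Or.inl (Or.inr rfl))
  | a :: b :: c :: t, h => by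
    by_cases h1 : pairOk d a b
    · by_cases h2 : tripOk d a b c
      · have h3 : ¬ good d (b :: c :: t) := fun hg => h ⟨h1, h2, hg⟩
        rw [show a :: b :: c :: t = [a] ++ (b :: c :: t) from rfl, wp_append,
          wp_bad (b :: c :: t) h3, mul_zero]
      · rw [show a :: b :: c :: t = [a, b, c] ++ t from rfl, wp_append]
        have : wp F d [a, b, c] = proj F d (gen F d a * gen F d b * gen F d c) := by
          simp [wp, mul_assoc]
        rw [this, proj_relSet F d (Or.inr ⟨a, b, c, rfl, h2⟩), zero_mul]
    · have hp : (a = 0 ∧ b = 0) ∨ (a = 1 ∧ b = 1) := by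
        by_contra hc
        push_neg at hc
        exact h1 ⟨fun hab => hc.1 hab.1 hab.2, fun hab => hc.2 hab.1 hab.2⟩
      rw [show a :: b :: c :: t = [a, b] ++ (c :: t) from rfl, wp_append]
      have : wp F d [a, b] = proj F d (gen F d a * gen F d b) := by simp [wp]
      rw [this]
      rcases hp with ⟨rfl, rfl⟩ | ⟨rfl, rfl⟩
      · rw [proj_relSet F d (Or.inl (Or.inl rfl)), zero_mul]
      · rw [proj_relSet F d (Or.inl (Or.inr rfl)), zero_mul]

/-- the module of formal linear combinations of words -/
abbrev V := List (Fin (d + 1)) →₀ F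

/-- the shift operator sending a word to its extension by `i`, or to `0` if bad -/
def T (i : Fin (d + 1)) : Module.End F (V F d) :=
  Finsupp.lsum F fun l => if good d (i :: l) then Finsupp.lsingle (i :: l) else 0

lemma T_single (i : Fin (d + 1)) (l : List (Fin (d + 1))) (c : F) :
    T F d i (Finsupp.single l c) =
      if good d (i :: l) then Finsupp.single (i :: l) c else 0 := by
  rw [T, Finsupp.lsum_single]
  split_ifs <;> simp [Finsupp.lsingle_apply]

/-- the representation of the free algebra on `V` -/
def Phi : FreeAlgebra F (Fin (d + 1)) →ₐ[F] Module.End F (V F d) :=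
  FreeAlgebra.lift F (T F d)

lemma Phi_gen (i : Fin (d + 1)) : Phi F d (gen F d i) = T F d i :=
  FreeAlgebra.lift_ι_apply _ _

lemma Phi_rel : ∀ ⦃u v : FreeAlgebra F (Fin (d + 1))⦄, rel F d u v → Phi F d u = Phi F d v := by
  rintro u v ⟨hu, rfl⟩
  rw [map_zero]
  simp only [relSet, Set.mem_union, Set.mem_insert_iff, Set.mem_singleton_iff,
    Set.mem_setOf_eq] at hu
  rcases hu with (rfl | rfl) | ⟨a, b, c, rfl, h⟩
  · rw [map_mul, Phi_gen]
    refine Finsupp.lhom_ext fun l e => ?_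
    simp only [Module.End.mul_apply, LinearMap.zero_apply, T_single]
    split_ifs with hg
    · rw [T_single, if_neg (not_good_xx d l)]
    · exact map_zero _
  · rw [map_mul, Phi_gen]
    refine Finsupp.lhom_ext fun l e => ?_
    simp only [Module.End.mul_apply, LinearMap.zero_apply, T_single]
    split_ifs with hg
    · rw [T_single, if_neg (not_good_yy d l)]
    · exact map_zero _
  · rw [map_mul, map_mul, Phi_gen, Phi_gen, Phi_gen]
    refine Finsupp.lhom_ext fun l e => ?_
    simp only [Module.End.mul_apply, LinearMap.zero_apply, T_single]
    split_ifs with hg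
    · rw [T_single]
      split_ifs with hg2
      · rw [T_single, if_neg (not_good_trip d h l)]
      · exact map_zero _
    · rw [map_zero, map_zero]

/-- the representation of `R` on `V` -/
def Psi : Ralg F d →ₐ[F] Module.End F (V F d) :=
  RingQuot.liftAlgHom F ⟨Phi F d, Phi_rel F d⟩

lemma Psi_proj (u : FreeAlgebra F (Fin (d + 1))) : Psi F d (proj F d u) = Phi F d u := by
  rw [Psi, proj, RingQuot.liftAlgHom_mkAlgHom_apply]

/-- evaluation of the representation at the empty word -/
def ev : Ralg F d →ₗ[F] V F d where
  toFun r := Psi F d r (Finsupp.single [] 1)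
  map_add' r s := by simp
  map_smul' a r := by simp

lemma ev_wp : ∀ l : List (Fin (d + 1)),
    ev F d (wp F d l) = if good d l then Finsupp.single l (1 : F) else 0 := by
  intro l
  induction l with
  | nil => simp [ev, wp_nil, good_nil]
  | cons i l ih =>
    have : ev F d (wp F d (i :: l)) = T F d i (ev F d (wp F d l)) := by
      simp only [ev, LinearMap.coe_mk, AddHom.coe_mk, wp_cons, map_mul, Psi_proj, Phi_gen,
        Module.End.mul_apply]
    rw [this, ih]
    by_cases hg : good d l
    · rw [if_pos hg, T_single]
    · rw [if_neg hg, if_neg (fun hgi => hg (good_tail d hgi)), map_zero]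

lemma comp_eq (n : ℕ) :
    comp F d n = Submodule.span F
      (Set.range fun w : Fin n → Fin (d + 1) => wp F d (List.ofFn w)) := by
  unfold comp
  congr 1
  ext u
  constructor <;> rintro ⟨w, rfl⟩ <;> refine ⟨w, ?_⟩ <;>
    simp [wp, List.map_ofFn, Function.comp_def]

lemma mem_range_ofFn (l : List (Fin (d + 1))) {n : ℕ} (hl : l.length = n) :
    wp F d l ∈ Set.range (fun w : Fin n → Fin (d + 1) => wp F d (List.ofFn w)) := by
  subst hl
  refine ⟨fun i => l[(i : ℕ)], ?_⟩
  show wp F d (List.ofFn fun i => l[(i : ℕ)]) = wp F d l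
  rw [List.ofFn_getElem]

lemma finrank_comp (n : ℕ) (ι : Type) [Fintype ι] (g : ι → List (Fin (d + 1)))
    (hlen : ∀ i, (g i).length = n) (hgood : ∀ i, good d (g i))
    (hinj : Function.Injective g)
    (hsurj : ∀ l : List (Fin (d + 1)), l.length = n → good d l → ∃ i, g i = l) :
    Module.finrank F (comp F d n) = Fintype.card ι := by
  have hspan : comp F d n = Submodule.span F (Set.range fun i => wp F d (g i)) := by
    rw [comp_eq]
    apply le_antisymm
    · rw [Submodule.span_le]
      rintro u ⟨w, rfl⟩
      dsimp only
      by_cases hg : good d (List.ofFn w)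
      · obtain ⟨i, hi⟩ := hsurj (List.ofFn w) (by simp) hg
        rw [← hi]
        exact Submodule.subset_span ⟨i, rfl⟩
      · rw [wp_bad F d _ hg]
        exact Submodule.zero_mem _
    · rw [Submodule.span_le]
      rintro u ⟨i, rfl⟩
      exact Submodule.subset_span (mem_range_ofFn F d (g i) (hlen i))
  have hind : LinearIndependent F fun i => wp F d (g i) := by
    have hcomp : (ev F d ∘ fun i => wp F d (g i)) = fun i => Finsupp.single (g i) (1 : F) := by
      funext i
      simp [ev_wp, hgood i]
    apply LinearIndependent.of_comp (ev F d)
    rw [hcomp]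
    exact (Finsupp.basisSingleOne (R := F) (ι := List (Fin (d + 1)))).linearIndependent.comp
      g hinj
  rw [hspan, finrank_span_eq_card hind]

end Stmt8Aux


theorem stmt_8 (hd : 1 ≤ d) (n : ℕ) (hn : 2 < n) :
    (Odd n → Module.finrank F (comp F d n) = 2 * d) ∧
    (Even n → Module.finrank F (comp F d n) = d ^ 2 + 1) := by
  have h01 : (0 : Fin (d + 1)) ≠ 1 := by
    obtain ⟨d', rfl⟩ : ∃ d', d = d' + 1 := ⟨d - 1, by omega⟩
    intro h
    have h2 := congrArg Fin.val h
    rw [Fin.val_zero, Fin.val_one] at h2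
    omega
  constructor
  · intro hodd
    obtain ⟨k, hk⟩ := hodd
    obtain ⟨m, rfl⟩ : ∃ m, n = 2 * m + 3 := ⟨k - 1, by omega⟩
    have := Stmt8Aux.finrank_comp F d (2 * m + 3) (Fin d ⊕ Fin d)
      (Sum.elim (fun j => Stmt8Aux.xyw d (m + 1) ++ [(1 : Fin (d + 1)).succAbove j])
        (fun j => (0 : Fin (d + 1)).succAbove j :: Stmt8Aux.xyw d (m + 1)))
      (fun i => by cases i <;> simp [Stmt8Aux.xyw_length])
      (fun i => by
        cases i with
        | inl j => exact Stmt8Aux.good_A d h01 m (Fin.succAbove_ne 1 j)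
        | inr j => exact Stmt8Aux.good_B d h01 m (Fin.succAbove_ne 0 j))
      (by
        rintro (i | i) (j | j) h <;> simp only [Sum.elim_inl, Sum.elim_inr] at h
        · have h2 := List.append_cancel_left h
          simp only [List.cons.injEq, and_true] at h2
          exact congrArg Sum.inl (Fin.succAbove_right_injective h2)
        · simp only [Stmt8Aux.xyw_succ, List.cons_append, List.cons.injEq] at h
          exact absurd h.1.symm (Fin.succAbove_ne 0 j)
        · simp only [Stmt8Aux.xyw_succ, List.cons_append, List.cons.injEq] at h
          exact absurd h.1 (Fin.succAbove_ne 0 i)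
        · simp only [List.cons.injEq, and_true] at h
          exact congrArg Sum.inr (Fin.succAbove_right_injective h))
      (by
        intro l hlen hgood
        rcases l with _ | ⟨a, _ | ⟨b, _ | ⟨c, t⟩⟩⟩ <;> simp only [List.length] at hlen <;>
          try omega
        rcases Stmt8Aux.classify d h01 t a b c hgood with
          ⟨m', c', hc', heq⟩ | ⟨m', a', ha', heq⟩ | ⟨m', a', b', ha', hb', heq⟩ | ⟨m', heq⟩
        · have hm : m' = m := by
            have hl2 := congrArg List.length heq
            simp [Stmt8Aux.xyw_length] at hl2
            omega
          subst hm
          obtain ⟨j, hj⟩ := Fin.exists_succAbove_eq hc'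
          exact ⟨Sum.inl j, by simp only [Sum.elim_inl]; rw [hj, ← heq]⟩
        · have hm : m' = m := by
            have hl2 := congrArg List.length heq
            simp [Stmt8Aux.xyw_length] at hl2
            omega
          subst hm
          obtain ⟨j, hj⟩ := Fin.exists_succAbove_eq ha'
          exact ⟨Sum.inr j, by simp only [Sum.elim_inr]; rw [hj, ← heq]⟩
        · have hl2 := congrArg List.length heq
          simp [Stmt8Aux.xyw_length] at hl2
          omega
        · have hl2 := congrArg List.length heq
          simp [Stmt8Aux.xyw_length] at hl2
          omega)
    rw [this]
    simp only [Fintype.card_sum, Fintype.card_fin]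
    omega
  · intro heven
    obtain ⟨k, hk⟩ := heven
    obtain ⟨m, rfl⟩ : ∃ m, n = 2 * m + 4 := ⟨k - 2, by omega⟩
    have := Stmt8Aux.finrank_comp F d (2 * m + 4) ((Fin d × Fin d) ⊕ Unit)
      (Sum.elim
        (fun p => (0 : Fin (d + 1)).succAbove p.1 ::
          (Stmt8Aux.xyw d (m + 1) ++ [(1 : Fin (d + 1)).succAbove p.2]))
        (fun _ => Stmt8Aux.xyw d (m + 2)))
      (fun i => by cases i <;> simp [Stmt8Aux.xyw_length])
      (fun i => by
        cases i with
        | inl p =>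
          exact Stmt8Aux.good_C d h01 m (Fin.succAbove_ne 0 p.1) (Fin.succAbove_ne 1 p.2)
        | inr u => exact Stmt8Aux.good_xy d h01 (m + 2))
      (by
        rintro (i | i) (j | j) h <;> simp only [Sum.elim_inl, Sum.elim_inr] at h
        · simp only [List.cons.injEq] at h
          have h1 : i.1 = j.1 := Fin.succAbove_right_injective h.1
          have h2 := List.append_cancel_left h.2
          simp only [List.cons.injEq, and_true] at h2
          have h3 : i.2 = j.2 := Fin.succAbove_right_injective h2
          exact congrArg Sum.inl (Prod.ext h1 h3)
        · simp only [Stmt8Aux.xyw_succ, List.cons.injEq] at h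
          exact absurd h.1 (Fin.succAbove_ne 0 i.1)
        · simp only [Stmt8Aux.xyw_succ, List.cons.injEq] at h
          exact absurd h.1.symm (Fin.succAbove_ne 0 j.1)
        · exact congrArg Sum.inr rfl)
      (by
        intro l hlen hgood
        rcases l with _ | ⟨a, _ | ⟨b, _ | ⟨c, t⟩⟩⟩ <;> simp only [List.length] at hlen <;>
          try omega
        rcases Stmt8Aux.classify d h01 t a b c hgood with
          ⟨m', c', hc', heq⟩ | ⟨m', a', ha', heq⟩ | ⟨m', a', b', ha', hb', heq⟩ | ⟨m', heq⟩
        · have hl2 := congrArg List.length heq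
          simp [Stmt8Aux.xyw_length] at hl2
          omega
        · have hl2 := congrArg List.length heq
          simp [Stmt8Aux.xyw_length] at hl2
          omega
        · have hm : m' = m := by
            have hl2 := congrArg List.length heq
            simp [Stmt8Aux.xyw_length] at hl2
            omega
          subst hm
          obtain ⟨j1, hj1⟩ := Fin.exists_succAbove_eq ha'
          obtain ⟨j2, hj2⟩ := Fin.exists_succAbove_eq hb'
          exact ⟨Sum.inl (j1, j2), by simp only [Sum.elim_inl]; rw [hj1, hj2, ← heq]⟩
        · have hm : m' = m := by
            have hl2 := congrArg List.length heq
            simp [Stmt8Aux.xyw_length] at hl2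
            omega
          subst hm
          exact ⟨Sum.inr (), by simp only [Sum.elim_inr]; rw [← heq]⟩)
    rw [this]
    simp only [Fintype.card_sum, Fintype.card_prod, Fintype.card_fin, Fintype.card_unit]
    ring

end
end

section
/- If Eggert's Conjecture holds (for every finite-dimensional nilpotent commutative algebra R over a perfect field of characteristic p, dim R ≥ p dim R^(p), for all primes p), then for every finite nilpotent commutative semigroup S with zero and every positive integer n, card(S \ {0}) ≥ n · card(S^(n) \ {0}). -/
open Pointwise

/-- Product of submodules of a (possibly nonunital) algebra: the span of the
set of products. -/
noncomputable instance submul {F R : Type*} [Semiring F] [NonUnitalNonAssocSemiring R]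
    [Module F R] : Mul (Submodule F R) :=
  ⟨fun V W => Submodule.span F (Set.image2 (· * ·) (V : Set R) (W : Set R))⟩

section pwlemmas

lemma pw_one {R : Type*} [Mul R] (x : R) : pw x 1 = x := rfl

lemma pw_succ {R : Type*} [Mul R] (x : R) {n : ℕ} (hn : 1 ≤ n) :
    pw x (n + 1) = x * pw x n := by
  match n, hn with
  | (k+1), _ => rfl

lemma pw_succ' {R : Type*} [Semigroup R] (x : R) {n : ℕ} (hn : 1 ≤ n) :
    pw x (n + 1) = pw x n * x := by
  induction n, hn using Nat.le_induction with
  | base => rfl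
  | succ k hk ih =>
    rw [pw_succ x (by omega), ih, ← mul_assoc, ← pw_succ x hk, ih]

lemma pw_add_s11 {R : Type*} [Semigroup R] (x : R) {a b : ℕ} (ha : 1 ≤ a) (hb : 1 ≤ b) :
    pw x (a + b) = pw x a * pw x b := by
  induction b, hb using Nat.le_induction with
  | base => rw [pw_succ' x ha, pw_one]
  | succ k hk ih =>
    rw [← add_assoc, pw_succ' x (by omega), ih, pw_succ' x hk, mul_assoc]

lemma pw_pw {R : Type*} [Semigroup R] (x : R) {a b : ℕ} (ha : 1 ≤ a) (hb : 1 ≤ b) :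
    pw (pw x a) b = pw x (a * b) := by
  induction b, hb using Nat.le_induction with
  | base => rw [pw_one, mul_one]
  | succ k hk ih =>
    rw [pw_succ _ hk, ih, show a * (k+1) = a + a * k from by ring,
      pw_add_s11 x ha (Nat.mul_pos ha hk)]

lemma pw_zero_elem {S : Type*} [MulZeroClass S] {n : ℕ} (hn : 1 ≤ n) : pw (0 : S) n = 0 := by
  induction n, hn using Nat.le_induction with
  | base => rfl
  | succ k hk ih => rw [pw_succ _ hk, zero_mul]

lemma mem_pw_set {S : Type*} [Mul S] {U : Set S} {s : S} (hs : s ∈ U) (n : ℕ) :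
    pw s n ∈ pw U n := by
  induction n with
  | zero => exact hs
  | succ k ih =>
    match k, ih with
    | 0, _ => exact hs
    | (k+1), ih => exact Set.mul_mem_mul hs ih

lemma pw_mul_pw {S : Type*} [Semigroup S] (hc : ∀ a b : S, a * b = b * a) (s t : S)
    {k : ℕ} (hk : 1 ≤ k) : pw s k * pw t k = pw (s * t) k := by
  induction k, hk using Nat.le_induction with
  | base => rfl
  | succ k hk ih =>
    rw [pw_succ s hk, pw_succ t hk, pw_succ (s*t) hk, ← ih, mul_assoc,
      ← mul_assoc (pw s k) t (pw t k), hc (pw s k) t, mul_assoc, ← mul_assoc]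

end pwlemmas

section contracted

class IsMulComm (S : Type*) [Mul S] : Prop where
  comm : ∀ a b : S, a * b = b * a

variable (F : Type) [Field F] (S : Type) [SemigroupWithZero S]

noncomputable def CA : Submodule F (MonoidAlgebra F S) :=
  MonoidAlgebra.supported F F ({0}ᶜ : Set S)

lemma mem_CA_iff {f : MonoidAlgebra F S} : f ∈ CA F S ↔ ↑f.coeff.support ⊆ ({0}ᶜ : Set S) :=
  MonoidAlgebra.mem_supported

noncomputable def er (x : MonoidAlgebra F S) : MonoidAlgebra F S := MonoidAlgebra.erase 0 x

lemma erase_mem_CA (f : MonoidAlgebra F S) :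
    er F S f ∈ CA F S := by
  rw [er]
  classical
  rw [mem_CA_iff, MonoidAlgebra.coeff_erase, Finsupp.support_erase]
  intro t ht
  simp only [Finset.coe_erase, Set.mem_diff, Set.mem_singleton_iff] at ht
  exact ht.2

noncomputable instance : Mul ↥(CA F S) :=
  ⟨fun f g => ⟨(f.1 * g.1).erase 0, erase_mem_CA F S _⟩⟩

lemma ca_mul_val (f g : ↥(CA F S)) : (f * g).1 = (f.1 * g.1).erase 0 := rfl

lemma single_zero_mul (c : F) (h : MonoidAlgebra F S) {t : S} (ht : t ≠ 0) :
    (MonoidAlgebra.single (0 : S) c * h).coeff t = 0 := by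
  apply MonoidAlgebra.single_mul_apply_of_not_exists_mul
  rintro ⟨d, hd⟩
  rw [zero_mul] at hd
  exact ht hd

lemma mul_single_zero (c : F) (h : MonoidAlgebra F S) {t : S} (ht : t ≠ 0) :
    (h * MonoidAlgebra.single (0 : S) c).coeff t = 0 := by
  apply MonoidAlgebra.mul_single_apply_of_not_exists_mul
  rintro ⟨d, hd⟩
  rw [mul_zero] at hd
  exact ht hd

lemma ma_add_apply (u v : MonoidAlgebra F S) (t : S) : (u + v).coeff t = u.coeff t + v.coeff t :=
  Finsupp.add_apply u.coeff v.coeff t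

lemma erase_mul_left (x y : MonoidAlgebra F S) :
    (er F S x * y).erase 0 = (x * y).erase 0 := by
  ext t
  simp only [MonoidAlgebra.coeff_erase]
  rcases eq_or_ne t 0 with rfl | ht
  · rw [Finsupp.erase_same, Finsupp.erase_same]
  · rw [Finsupp.erase_ne ht, Finsupp.erase_ne ht]
    have hx : x = er F S x + MonoidAlgebra.single 0 (x.coeff 0) :=
      (MonoidAlgebra.erase_add_single 0 x).symm
    conv_rhs => rw [hx]
    rw [add_mul, ma_add_apply, single_zero_mul F S _ _ ht, add_zero]

lemma erase_mul_right (x y : MonoidAlgebra F S) :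
    (x * er F S y).erase 0 = (x * y).erase 0 := by
  ext t
  simp only [MonoidAlgebra.coeff_erase]
  rcases eq_or_ne t 0 with rfl | ht
  · rw [Finsupp.erase_same, Finsupp.erase_same]
  · rw [Finsupp.erase_ne ht, Finsupp.erase_ne ht]
    have hy : y = er F S y + MonoidAlgebra.single 0 (y.coeff 0) :=
      (MonoidAlgebra.erase_add_single 0 y).symm
    conv_rhs => rw [hy]
    rw [mul_add, ma_add_apply, mul_single_zero F S _ _ ht, add_zero]

lemma ma_comm [IsMulComm S] (f g : MonoidAlgebra F S) : f * g = g * f := by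
  letI : CommSemigroup S :=
    { (inferInstance : Semigroup S) with mul_comm := IsMulComm.comm }
  exact mul_comm f g

noncomputable instance [IsMulComm S] : NonUnitalCommRing ↥(CA F S) :=
  { (inferInstance : AddCommGroup ↥(CA F S)),
    (inferInstance : Mul ↥(CA F S)) with
    left_distrib := fun a b c => Subtype.ext <| by
      show (a.1 * (b.1 + c.1)).erase 0 = (a.1 * b.1).erase 0 + (a.1 * c.1).erase 0
      rw [mul_add]
      exact MonoidAlgebra.coeff_injective (Finsupp.erase_add 0 (a.1 * b.1).coeff (a.1 * c.1).coeff)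
    right_distrib := fun a b c => Subtype.ext <| by
      show ((a.1 + b.1) * c.1).erase 0 = (a.1 * c.1).erase 0 + (b.1 * c.1).erase 0
      rw [add_mul]
      exact MonoidAlgebra.coeff_injective (Finsupp.erase_add 0 (a.1 * c.1).coeff (b.1 * c.1).coeff)
    zero_mul := fun a => Subtype.ext <| by
      show ((0 : MonoidAlgebra F S) * a.1).erase 0 = (0 : MonoidAlgebra F S)
      rw [zero_mul]
      exact MonoidAlgebra.erase_zero _
    mul_zero := fun a => Subtype.ext <| by
      show (a.1 * (0 : MonoidAlgebra F S)).erase 0 = (0 : MonoidAlgebra F S)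
      rw [mul_zero]
      exact MonoidAlgebra.erase_zero _
    mul_assoc := fun a b c => Subtype.ext <| by
      show (er F S (a.1 * b.1) * c.1).erase 0 = (a.1 * er F S (b.1 * c.1)).erase 0
      rw [erase_mul_left, erase_mul_right, mul_assoc]
    mul_comm := fun a b => Subtype.ext <| by
      show (a.1 * b.1).erase 0 = (b.1 * a.1).erase 0
      rw [ma_comm] }

lemma erase_smul_ma (c : F) (x : MonoidAlgebra F S) :
    (MonoidAlgebra.erase 0 (c • x) : MonoidAlgebra F S) = c • (MonoidAlgebra.erase 0 x) := by
  ext t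
  simp only [MonoidAlgebra.coeff_erase, MonoidAlgebra.coeff_smul]
  rcases eq_or_ne t 0 with rfl | ht
  · rw [Finsupp.erase_same, Finsupp.smul_apply, Finsupp.erase_same, smul_zero]
  · rw [Finsupp.erase_ne ht, Finsupp.smul_apply, Finsupp.smul_apply, Finsupp.erase_ne ht]

noncomputable instance : IsScalarTower F ↥(CA F S) ↥(CA F S) :=
  ⟨fun c x y => Subtype.ext <| by
    show ((c • x.1) * y.1).erase 0 = c • ((x.1 * y.1).erase 0)
    rw [smul_mul_assoc, erase_smul_ma]⟩

noncomputable instance : SMulCommClass F ↥(CA F S) ↥(CA F S) :=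
  ⟨fun c x y => Subtype.ext <| by
    show c • ((x.1 * y.1).erase 0) = (x.1 * (c • y.1)).erase 0
    rw [mul_smul_comm, erase_smul_ma]⟩

noncomputable instance [Finite S] : Module.Finite F (MonoidAlgebra F S) := by
  haveI := Fintype.ofFinite S
  exact Module.Finite.equiv (MonoidAlgebra.coeffLinearEquiv F : MonoidAlgebra F S ≃ₗ[F] (S →₀ F)).symm

lemma finrank_CA [Finite S] :
    Module.finrank F ↥(CA F S) = ((Set.univ : Set S) \ {0}).ncard := by
  classical
  haveI := Fintype.ofFinite S
  have h := LinearEquiv.finrank_eq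
      (MonoidAlgebra.supportedEquivFinsupp ({0}ᶜ : Set S) : ↥(CA F S) ≃ₗ[F] (↑({0}ᶜ : Set S) →₀ F))
  rw [Module.finrank_finsupp_self] at h
  calc Module.finrank F ↥(CA F S) = Fintype.card ↑({0}ᶜ : Set S) := h
    _ = ((Set.univ : Set S) \ {0}).ncard := by
        rw [← Set.compl_eq_univ_diff, ← Nat.card_coe_set_eq, Nat.card_eq_fintype_card]

end contracted

section nilp

variable (F : Type) [Field F] (S : Type) [SemigroupWithZero S]

lemma pw_top_le [IsMulComm S] (k : ℕ) (hk : 1 ≤ k) :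
    pw (⊤ : Submodule F ↥(CA F S)) k ≤
      Submodule.comap (CA F S).subtype (MonoidAlgebra.supported F F (pw (Set.univ : Set S) k)) := by
  classical
  induction k, hk using Nat.le_induction with
  | base =>
    intro x _
    simp only [Submodule.mem_comap, MonoidAlgebra.mem_supported]
    intro t _
    exact Set.mem_univ t
  | succ k hk ih =>
    rw [pw_succ _ hk]
    show Submodule.span F _ ≤ _
    rw [Submodule.span_le]
    rintro x ⟨a, -, b, hb, rfl⟩
    simp only [SetLike.mem_coe, Submodule.mem_comap, MonoidAlgebra.mem_supported]
    have hb' : ↑(b.1.coeff.support) ⊆ pw (Set.univ : Set S) k := by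
      have := ih hb
      simpa only [Submodule.mem_comap, MonoidAlgebra.mem_supported, Submodule.subtype_apply] using this
    calc (↑(((a * b).1).coeff.support) : Set S)
        ⊆ ↑((a.1 * b.1).coeff.support) := by
          rw [ca_mul_val]
          refine Finset.coe_subset.mpr ?_
          rw [MonoidAlgebra.coeff_erase, Finsupp.support_erase]
          exact Finset.erase_subset _ _
      _ ⊆ ↑(a.1.coeff.support * b.1.coeff.support) :=
          Finset.coe_subset.mpr (MonoidAlgebra.support_coeff_mul_subset _ _)
      _ = ↑(a.1.coeff.support) * ↑(b.1.coeff.support) := Finset.coe_mul _ _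
      _ ⊆ Set.univ * pw (Set.univ : Set S) k :=
          Set.mul_subset_mul (Set.subset_univ _) hb'
      _ = pw (Set.univ : Set S) (k + 1) := (pw_succ _ hk).symm

lemma ca_nilpotent [IsMulComm S] {m : ℕ} (hm : 1 ≤ m)
    (h : pw (Set.univ : Set S) m = {0}) :
    pw (⊤ : Submodule F ↥(CA F S)) m = ⊥ := by
  rw [eq_bot_iff]
  intro x hx
  have h1 : ↑(x.1.coeff.support) ⊆ ({0} : Set S) := by
    have := pw_top_le F S m hm hx
    simpa only [Submodule.mem_comap, MonoidAlgebra.mem_supported, Submodule.subtype_apply, h] using this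
  have h2 : ↑(x.1.coeff.support) ⊆ ({0}ᶜ : Set S) := (mem_CA_iff F S).mp x.2
  have hsupp : x.1.coeff.support = ∅ := by
    rw [Finset.eq_empty_iff_forall_notMem]
    intro t ht
    exact h2 ht (h1 ht)
  have : x.1 = 0 := MonoidAlgebra.coeff_eq_zero.mp (Finsupp.support_eq_empty.mp hsupp)
  simpa using Subtype.ext this

noncomputable def sing (s : S) (hs : s ≠ 0) : ↥(CA F S) :=
  ⟨MonoidAlgebra.single s 1, by
    rw [mem_CA_iff, MonoidAlgebra.coeff_single, Finsupp.support_single_ne_zero s one_ne_zero]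
    simpa using Ne.symm hs⟩

lemma sing_val (s : S) (hs : s ≠ 0) :
    (sing F S s hs).1 = MonoidAlgebra.single s 1 := rfl

open scoped Classical in
lemma pw_sing [IsMulComm S] (s : S) (hs : s ≠ 0) {k : ℕ} (hk : 1 ≤ k) :
    (pw (sing F S s hs) k).1 =
      if pw s k = 0 then 0 else MonoidAlgebra.single (pw s k) 1 := by
  classical
  induction k, hk using Nat.le_induction with
  | base => rw [pw_one, pw_one, if_neg hs]; rfl
  | succ k hk ih =>
    rw [pw_succ _ hk, pw_succ s hk, ca_mul_val, ih, sing_val]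
    by_cases h0 : pw s k = 0
    · rw [if_pos h0, mul_zero, h0, mul_zero, if_pos rfl, MonoidAlgebra.erase_zero]
    · rw [if_neg h0, MonoidAlgebra.single_mul_single, one_mul]
      by_cases h1 : s * pw s k = 0
      · rw [if_pos h1, h1]
        exact MonoidAlgebra.erase_single _ _
      · rw [if_neg h1]
        exact MonoidAlgebra.coeff_injective (Finsupp.erase_single_ne (Ne.symm h1))

end nilp

lemma prime_case
    (eggert : ∀ (p : ℕ), p.Prime → ∀ (F : Type) [Field F] [CharP F p],
        (∀ a : F, ∃ b : F, b ^ p = a) →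
        ∀ (R : Type) [NonUnitalCommRing R] [Module F R] [SMulCommClass F R R]
          [IsScalarTower F R R] [FiniteDimensional F R],
          (∃ m, 1 ≤ m ∧ pw (⊤ : Submodule F R) m = ⊥) →
          p * Module.finrank F (Submodule.span F (Set.range fun x : R => pw x p))
            ≤ Module.finrank F R)
    {p : ℕ} (hp : p.Prime) (S : Type) [SemigroupWithZero S] [IsMulComm S] [Finite S]
    (hnil : ∃ m, 1 ≤ m ∧ pw (Set.univ : Set S) m = {0}) :
    p * ((Set.range fun s : S => pw s p) \ {0}).ncard
      ≤ ((Set.univ : Set S) \ {0}).ncard := by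
  classical
  haveI : Fact p.Prime := ⟨hp⟩
  have hp1 : 1 ≤ p := hp.one_lt.le
  obtain ⟨m, hm, hnl⟩ := hnil
  have key := eggert p hp (ZMod p) (fun a => ⟨a, ZMod.pow_card a⟩) (↥(CA (ZMod p) S))
    ⟨m, hm, ca_nilpotent (ZMod p) S hm hnl⟩
  rw [finrank_CA] at key
  refine le_trans ?_ key
  set F : Type := ZMod p
  set R : Type := ↥(CA F S) with hR
  set W : Submodule F R := Submodule.span F (Set.range fun x : R => pw x p) with hW
  set T : Set S := (Set.range fun s : S => pw s p) \ {0} with hT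
  haveI : Fintype ↥T := Fintype.ofFinite ↥T
  have ht0 : ∀ t : ↥T, t.1 ≠ 0 := fun t => t.2.2
  have hmemW : ∀ t : ↥T, sing F S t.1 (ht0 t) ∈ W := by
    intro t
    obtain ⟨s, hs⟩ := t.2.1
    have hs' : pw s p = (t : S) := hs
    have hs0 : s ≠ 0 := by
      rintro rfl
      rw [pw_zero_elem hp1] at hs'
      exact ht0 t hs'.symm
    have hv : sing F S t.1 (ht0 t) = pw (sing F S s hs0) p := by
      refine Subtype.ext ?_
      rw [pw_sing F S s hs0 hp1, hs', if_neg (ht0 t)]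
      rfl
    rw [hv]
    exact Submodule.subset_span ⟨sing F S s hs0, rfl⟩
  set v : ↥T → ↥W := fun t => ⟨sing F S t.1 (ht0 t), hmemW t⟩ with hv
  have hli : LinearIndependent F fun t : ↥T => (MonoidAlgebra.single t.1 1 : MonoidAlgebra F S) := by
    have hb : LinearIndependent F fun s : S => (MonoidAlgebra.single s 1 : MonoidAlgebra F S) :=
      (MonoidAlgebra.basis S F).linearIndependent
    exact hb.comp Subtype.val Subtype.val_injective
  have hli' : LinearIndependent F v := by
    refine LinearIndependent.of_comp ((CA F S).subtype.comp W.subtype) ?_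
    have : (((CA F S).subtype.comp W.subtype) : ↥W →ₗ[F] MonoidAlgebra F S) ∘ v
        = fun t : ↥T => (MonoidAlgebra.single t.1 1 : MonoidAlgebra F S) := funext fun t => rfl
    rw [this]
    exact hli
  have hcard : T.ncard ≤ Module.finrank F ↥W := by
    rw [← Nat.card_coe_set_eq, Nat.card_eq_fintype_card]
    exact hli'.fintype_card_le_finrank
  exact Nat.mul_le_mul_left p hcard

section mainpart

lemma pw_hom {A B : Type*} [Mul A] [Mul B] (f : A → B)
    (hf : ∀ a b, f (a * b) = f a * f b) (x : A) : ∀ k, f (pw x k) = pw (f x) k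
  | 0 => rfl
  | 1 => rfl
  | (k+2) => by
    rw [show pw x (k+2) = x * pw x (k+1) from rfl, hf, pw_hom f hf x (k+1)]
    rfl

lemma pw_univ_hom {A B : Type*} [Mul A] [Mul B] (f : A → B)
    (hf : ∀ a b, f (a * b) = f a * f b) :
    ∀ k, ∀ x ∈ pw (Set.univ : Set A) k, f x ∈ pw (Set.univ : Set B) k
  | 0, x, _ => Set.mem_univ _
  | 1, x, _ => Set.mem_univ _
  | (k+2), x, hx => by
    obtain ⟨a, -, b, hb, rfl⟩ := hx
    rw [hf]
    exact Set.mul_mem_mul (Set.mem_univ _) (pw_univ_hom f hf (k+1) b hb)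

variable {S : Type} [SemigroupWithZero S]

lemma zero_mem_PS {m : ℕ} (hm : 1 ≤ m) :
    (0 : S) ∈ Set.range fun s : S => pw s m := ⟨0, pw_zero_elem hm⟩

lemma mul_mem_PS [IsMulComm S] {m : ℕ} (hm : 1 ≤ m) {a b : S}
    (ha : a ∈ Set.range fun s : S => pw s m) (hb : b ∈ Set.range fun s : S => pw s m) :
    a * b ∈ Set.range fun s : S => pw s m := by
  obtain ⟨s, rfl⟩ := ha
  obtain ⟨t, rfl⟩ := hb
  exact ⟨s * t, (pw_mul_pw IsMulComm.comm s t hm).symm⟩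

end mainpart

lemma main_aux
    (eggert : ∀ (p : ℕ), p.Prime → ∀ (F : Type) [Field F] [CharP F p],
        (∀ a : F, ∃ b : F, b ^ p = a) →
        ∀ (R : Type) [NonUnitalCommRing R] [Module F R] [SMulCommClass F R R]
          [IsScalarTower F R R] [FiniteDimensional F R],
          (∃ m, 1 ≤ m ∧ pw (⊤ : Submodule F R) m = ⊥) →
          p * Module.finrank F (Submodule.span F (Set.range fun x : R => pw x p))
            ≤ Module.finrank F R) :
    ∀ (n : ℕ), 1 ≤ n → ∀ (S : Type) [SemigroupWithZero S], (∀ a b : S, a * b = b * a) →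
      Finite S → (∃ m, 1 ≤ m ∧ pw (Set.univ : Set S) m = {0}) →
        n * ((Set.range fun s : S => pw s n) \ {0}).ncard
          ≤ ((Set.univ : Set S) \ {0}).ncard := by
  intro n
  induction n using Nat.strong_induction_on with
  | _ n ih =>
    intro hn S instS hcomm hfin hnil
    haveI : IsMulComm S := ⟨hcomm⟩
    rcases eq_or_lt_of_le hn with h1 | h2
    · -- n = 1
      subst h1  -- ?
      have hrange : (Set.range fun s : S => pw s 1) = Set.univ :=
        Set.eq_univ_of_forall fun x => ⟨x, rfl⟩
      rw [hrange, one_mul]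
    · -- n ≥ 2
      set p := n.minFac with hpdef
      have hp : p.Prime := Nat.minFac_prime (by omega)
      have hp1 : 1 ≤ p := hp.one_lt.le
      set m := n / p with hmdef
      have hpm : m * p = n := Nat.div_mul_cancel (Nat.minFac_dvd n)
      have hm1 : 1 ≤ m := Nat.div_pos (Nat.minFac_le (by omega)) hp.pos
      have hmn : m < n := Nat.div_lt_self (by omega) hp.one_lt
      -- the subsemigroup of m-th powers
      set P : Set S := Set.range fun s : S => pw s m with hP
      letI : Zero ↥P := ⟨⟨0, zero_mem_PS hm1⟩⟩
      letI : Mul ↥P := ⟨fun a b => ⟨a.1 * b.1, mul_mem_PS hm1 a.2 b.2⟩⟩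
      letI : SemigroupWithZero ↥P :=
        { mul_assoc := fun a b c => Subtype.ext (mul_assoc a.1 b.1 c.1)
          zero_mul := fun a => Subtype.ext (zero_mul a.1)
          mul_zero := fun a => Subtype.ext (mul_zero a.1) }
      haveI : IsMulComm ↥P := ⟨fun a b => Subtype.ext (hcomm a.1 b.1)⟩
      have hval : ∀ a b : ↥P, ((a * b : ↥P) : S) = (a : S) * (b : S) := fun a b => rfl
      have hzval : ((0 : ↥P) : S) = 0 := rfl
      have hpwv : ∀ (x : ↥P) (k : ℕ), ((pw x k : ↥P) : S) = pw (x : S) k :=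
        fun x k => pw_hom Subtype.val hval x k
      -- nilpotency of ↥P
      obtain ⟨m0, hm0, hnl0⟩ := hnil
      have hnil' : ∃ m', 1 ≤ m' ∧ pw (Set.univ : Set ↥P) m' = {0} := by
        refine ⟨m0, hm0, ?_⟩
        ext x
        constructor
        · intro hx
          have := pw_univ_hom (Subtype.val : ↥P → S) hval m0 x hx
          rw [hnl0] at this
          have hx0 : (x : S) = 0 := this
          exact Subtype.ext hx0
        · intro hx
          rw [Set.mem_singleton_iff] at hx
          subst hx
          have := mem_pw_set (Set.mem_univ (0 : ↥P)) m0
          rwa [pw_zero_elem hm0] at this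
      have hprime := prime_case eggert hp ↥P hnil'
      -- transfer ncards
      have hinj : Function.Injective (Subtype.val : ↥P → S) := Subtype.val_injective
      have himg1 : (Subtype.val : ↥P → S) '' ((Set.univ : Set ↥P) \ {0})
          = P \ {0} := by
        rw [Set.image_diff hinj, Set.image_univ, Subtype.range_val, Set.image_singleton, hzval]
      have himg2 : (Subtype.val : ↥P → S) '' ((Set.range fun x : ↥P => pw x p) \ {0})
          = (Set.range fun s : S => pw s n) \ {0} := by
        rw [Set.image_diff hinj, Set.image_singleton, hzval]
        congr 1
        ext y
        constructor
        · rintro ⟨-, ⟨x, rfl⟩, rfl⟩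
          obtain ⟨s, hs⟩ := x.2
          have hs' : pw s m = (x : S) := hs
          refine ⟨s, ?_⟩
          show pw s n = _
          rw [hpwv, ← hs', pw_pw s hm1 hp1, hpm]
        · rintro ⟨s, rfl⟩
          refine ⟨pw (⟨pw s m, ⟨s, rfl⟩⟩ : ↥P) p, ⟨_, rfl⟩, ?_⟩
          show _ = pw s n
          rw [hpwv, pw_pw s hm1 hp1, hpm]
      have hc1 : ((Set.univ : Set ↥P) \ {0}).ncard = (P \ {0}).ncard := by
        rw [← himg1, Set.ncard_image_of_injective _ hinj]
      have hc2 : ((Set.range fun x : ↥P => pw x p) \ {0}).ncard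
          = ((Set.range fun s : S => pw s n) \ {0}).ncard := by
        rw [← himg2, Set.ncard_image_of_injective _ hinj]
      rw [hc1, hc2] at hprime
      -- combine with induction hypothesis at m
      have hih := ih m hmn hm1 S hcomm hfin ⟨m0, hm0, hnl0⟩
      calc n * ((Set.range fun s : S => pw s n) \ {0}).ncard
          = m * (p * ((Set.range fun s : S => pw s n) \ {0}).ncard) := by
            rw [← mul_assoc, hpm]
        _ ≤ m * (P \ {0}).ncard := Nat.mul_le_mul_left m hprime
        _ ≤ ((Set.univ : Set S) \ {0}).ncard := hih

theorem stmt_11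
    (eggert : ∀ (p : ℕ), p.Prime → ∀ (F : Type) [Field F] [CharP F p],
        (∀ a : F, ∃ b : F, b ^ p = a) →
        ∀ (R : Type) [NonUnitalCommRing R] [Module F R] [SMulCommClass F R R]
          [IsScalarTower F R R] [FiniteDimensional F R],
          (∃ m, 1 ≤ m ∧ pw (⊤ : Submodule F R) m = ⊥) →
          p * Module.finrank F (Submodule.span F (Set.range fun x : R => pw x p))
            ≤ Module.finrank F R) :
    ∀ (S : Type) [SemigroupWithZero S], (∀ a b : S, a * b = b * a) → Finite S →
      (∃ m, 1 ≤ m ∧ pw (Set.univ : Set S) m = {0}) →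
      ∀ n : ℕ, 1 ≤ n →
        n * ((Set.range fun s : S => pw s n) \ {0}).ncard
          ≤ ((Set.univ : Set S) \ {0}).ncard := by
  intro S _ hcomm hfin hnil n hn
  exact main_aux eggert n hn S hcomm hfin hnil
end

section
/- Let S be a commutative semigroup with zero, p a prime, and X a finite subset of S such that the p-th power map is one-to-one on X and takes no nonzero element of X to 0. Then for 1 ≤ i ≤ p, card(X^i \ {0}) ≥ card(X \ {0}), where X^i is the set of all i-fold products of elements of X. -/
open Pointwise

section Aux

open Finset MvPolynomial

theorem prodX_monomial {ι K : Type*} [CommSemiring K] [Fintype ι] :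
    ∀ (k : ℕ) (g : Fin k → ι),
      (∏ j, (MvPolynomial.X (g j) : MvPolynomial ι K))
        = MvPolynomial.monomial (∑ j, Finsupp.single (g j) 1) 1 := by
  intro k
  induction k with
  | zero => intro g; simp
  | succ k ih =>
    intro g
    rw [Fin.prod_univ_succ, Fin.sum_univ_succ, ih (fun j => g j.succ)]
    rw [show (MvPolynomial.X (g 0) : MvPolynomial ι K)
        = MvPolynomial.monomial (Finsupp.single (g 0) 1) 1 by
      rw [← MvPolynomial.X_pow_eq_monomial, pow_one]]
    rw [MvPolynomial.monomial_mul, one_mul]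

/-- Core abstract lemma: in a commutative monoid, if the `p`-th power map is
injective on the (finite) range of `π`, and every `i`-fold product of `π`'s that can be
completed to some `π x ^ p` lies in `Y`, then `card ι ≤ card Y`. -/
theorem core_lemma {M ι : Type*} [CommMonoid M] [Fintype ι]
    (p i : ℕ) (hp : p.Prime) (h1 : 1 ≤ i) (h2 : i < p)
    (π : ι → M) (hinj : ∀ x y : ι, π x ^ p = π y ^ p → x = y)
    (Y : Finset M)
    (hY : ∀ (f : Fin i → ι) (x : ι) (g : Fin (p - i) → ι),
      (∏ j, π (f j)) * (∏ j, π (g j)) = π x ^ p → (∏ j, π (f j)) ∈ Y) :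
    Fintype.card ι ≤ Y.card := by
  classical
  rcases Nat.eq_zero_or_pos (Fintype.card ι) with hn0 | hn0
  · omega
  haveI : Fact p.Prime := ⟨hp⟩
  set K := ZMod p with hK
  set B := MvPolynomial ι K with hB
  set A := MonoidAlgebra B M with hA
  haveI hAchar : CharP A p := by
    haveI : Nontrivial A := MonoidAlgebra.instNontrivial
    refine (CharP.charP_iff_prime_eq_zero hp).mpr ?_
    have hc : ((p : ℕ) : A) = algebraMap B A ((p : ℕ) : B) := (map_natCast (algebraMap B A) p).symm
    rw [hc, CharP.cast_eq_zero B p, map_zero]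
  haveI : ExpChar A p := ExpChar.prime hp
  -- products of variables / of π's
  set PP : ∀ k : ℕ, (Fin k → ι) → M := fun k f => ∏ j, π (f j) with hPP
  set MM : ∀ k : ℕ, (Fin k → ι) → B := fun k f => ∏ j, (X (f j) : B) with hMM
  set v : A := ∑ x : ι, MonoidAlgebra.single (π x) (X x : B) with hv
  have vpow : ∀ k : ℕ, v ^ (k + 1) =
      ∑ f : Fin (k + 1) → ι, MonoidAlgebra.single (PP (k+1) f) (MM (k+1) f) := by
    intro k
    induction k with
    | zero =>
      rw [pow_one, hv]
      refine (Fintype.sum_equiv (Equiv.funUnique (Fin 1) ι) _ _ fun f => ?_).symm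
      simp [hPP, hMM]
    | succ k ih =>
      rw [pow_succ', ih, hv, Finset.sum_mul_sum]
      rw [← Finset.sum_product']
      refine Fintype.sum_equiv (Fin.consEquiv fun _ => ι) _ _ fun fx => ?_
      rw [MonoidAlgebra.single_mul_single]
      congr 1
      · simp only [hPP, Fin.consEquiv_apply]
        conv_rhs => rw [Fin.prod_univ_succ]
        rfl
      · simp only [hMM, Fin.consEquiv_apply]
        conv_rhs => rw [Fin.prod_univ_succ]
        rfl
  have frob : v ^ p = ∑ x : ι, MonoidAlgebra.single (π x ^ p) ((X x : B) ^ p) := by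
    rw [hv, sum_pow_char]
    exact Finset.sum_congr rfl fun x _ => MonoidAlgebra.single_pow _ _ p
  set Vi : Finset M := Finset.image (PP i) Finset.univ with hVi
  set G' : Finset M := Vi.filter (· ∈ Y) with hG'
  set T : M → B := fun s => ∑ f ∈ Finset.univ.filter (fun f => PP i f = s), MM i f with hT
  set U : ι → M → B := fun x s =>
    ∑ g ∈ Finset.univ.filter (fun g => s * PP (p-i) g = π x ^ p), MM (p-i) g with hU
  -- the key identity
  have vpow' : ∀ k : ℕ, 1 ≤ k → v ^ k =
      ∑ f : Fin k → ι, MonoidAlgebra.single (PP k f) (MM k f) := by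
    intro k hk
    obtain ⟨k', rfl⟩ : ∃ k', k = k' + 1 := ⟨k - 1, by omega⟩
    exact vpow k'
  have key : ∀ x : ι, (X x : B) ^ p = ∑ s ∈ G', T s * U x s := by
    intro x
    have e0 : v ^ p = v ^ i * v ^ (p - i) := by rw [← pow_add]; congr 1; omega
    have eq1 : (∑ x' : ι, MonoidAlgebra.single (π x' ^ p) ((X x' : B) ^ p))
        = ∑ f : Fin i → ι, ∑ g : Fin (p-i) → ι,
            MonoidAlgebra.single (PP i f * PP (p-i) g) (MM i f * MM (p-i) g) := by
      rw [← frob, e0, vpow' i (by omega), vpow' (p-i) (by omega), Finset.sum_mul_sum]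
      exact Finset.sum_congr rfl fun f _ => Finset.sum_congr rfl fun g _ =>
        MonoidAlgebra.single_mul_single _ _ _ _
    have e2 := congrArg (fun w : MonoidAlgebra B M => w.coeff (π x ^ p)) eq1
    have lhs : (∑ x' : ι, MonoidAlgebra.single (π x' ^ p) ((X x' : B) ^ p)).coeff (π x ^ p)
        = (X x : B) ^ p := by
      rw [MonoidAlgebra.coeff_sum, Finsupp.finset_sum_apply]
      rw [Finset.sum_eq_single x]
      · simp [MonoidAlgebra.single_apply]
      · intro b _ hbx
        rw [MonoidAlgebra.single_apply, if_neg (fun h => hbx (hinj b x h))]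
      · intro h; exact absurd (Finset.mem_univ x) h
    have rhs : (∑ f : Fin i → ι, ∑ g : Fin (p-i) → ι,
        (MonoidAlgebra.single (PP i f * PP (p-i) g) (MM i f * MM (p-i) g)
          : MonoidAlgebra B M)).coeff (π x ^ p)
        = ∑ s ∈ G', T s * U x s := by
      rw [MonoidAlgebra.coeff_sum, Finsupp.finset_sum_apply]
      have step1 : ∀ f : Fin i → ι, (∑ g : Fin (p-i) → ι,
          (MonoidAlgebra.single (PP i f * PP (p-i) g) (MM i f * MM (p-i) g)
            : MonoidAlgebra B M)).coeff (π x ^ p) = MM i f * U x (PP i f) := by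
        intro f
        rw [MonoidAlgebra.coeff_sum, Finsupp.finset_sum_apply, hU]
        simp only
        rw [Finset.sum_filter, Finset.mul_sum]
        refine Finset.sum_congr rfl fun g _ => ?_
        rw [MonoidAlgebra.single_apply]
        split_ifs with h
        · rfl
        · rw [mul_zero]
      rw [Finset.sum_congr rfl (fun f _ => step1 f)]
      rw [← Finset.sum_fiberwise_of_maps_to
        (fun f _ => Finset.mem_image_of_mem (PP i) (Finset.mem_univ f))
        (fun f => MM i f * U x (PP i f))]
      have step2 : ∀ s ∈ Vi, (∑ f ∈ Finset.univ.filter (fun f => PP i f = s),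
          MM i f * U x (PP i f)) = T s * U x s := by
        intro s _
        rw [hT]
        simp only
        rw [Finset.sum_mul]
        refine Finset.sum_congr rfl fun f hf => ?_
        rw [(Finset.mem_filter.mp hf).2]
      rw [Finset.sum_congr rfl step2, hG']
      refine (Finset.sum_filter_of_ne ?_).symm
      intro s hs hne
      by_contra hsY
      apply hne
      have hU0 : U x s = 0 := by
        rw [hU]
        simp only
        apply Finset.sum_eq_zero
        intro g hg
        exfalso
        obtain ⟨f₀, -, hf₀⟩ := Finset.mem_image.mp hs
        have hprem : PP i f₀ * PP (p-i) g = π x ^ p := by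
          rw [hf₀]; exact (Finset.mem_filter.mp hg).2
        have hmem : PP i f₀ ∈ Y := by
          have := hY f₀ x g (by simpa only [hPP] using hprem)
          simpa only [hPP] using this
        rw [hf₀] at hmem
        exact hsY hmem
      rw [hU0, mul_zero]
    rw [← lhs, e2, rhs]
  -- the spanning family
  set Φ : ∀ d : ℕ, (({s // s ∈ G'} → Fin (d+1)) × (ι → Fin p)) → B := fun d x =>
    (∏ s : {s // s ∈ G'}, T s.1 ^ ((x.1 s : ℕ))) *
      monomial (Finsupp.equivFunOnFinite.symm fun t => ((x.2 t : ℕ))) 1 with hΦ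
  set W : ℕ → Submodule K B := fun d => Submodule.span K (Set.range (Φ d)) with hW
  have hmul : ∀ (s : M), s ∈ G' → ∀ (d' d'' : ℕ), d' + 1 ≤ d'' →
      ∀ b ∈ W d', T s * b ∈ W d'' := by
    intro s hs d' d'' hd b hb
    simp only [hW] at hb ⊢
    induction hb using Submodule.span_induction with
    | mem b hbm =>
      obtain ⟨⟨α, μ⟩, rfl⟩ := hbm
      set sh : {u // u ∈ G'} := ⟨s, hs⟩ with hsh
      set α' : {u // u ∈ G'} → Fin (d'' + 1) :=
        Function.update (fun u => Fin.castLE (by omega) (α u)) sh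
          ⟨(α sh : ℕ) + 1, by omega⟩ with hα'
      apply Submodule.subset_span
      refine ⟨(α', μ), ?_⟩
      simp only [hΦ]
      have h1 : (∏ u : {u // u ∈ G'}, T u.1 ^ ((α' u : ℕ)))
          = T s * ∏ u : {u // u ∈ G'}, T u.1 ^ ((α u : ℕ)) := by
        rw [← Finset.mul_prod_erase Finset.univ
            (fun u => T u.1 ^ ((α' u : ℕ))) (Finset.mem_univ sh),
          ← Finset.mul_prod_erase Finset.univ
            (fun u => T u.1 ^ ((α u : ℕ))) (Finset.mem_univ sh)]
        have h2 : ∀ u ∈ Finset.univ.erase sh,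
            T u.1 ^ ((α' u : ℕ)) = T u.1 ^ ((α u : ℕ)) := by
          intro u hu
          have hne : u ≠ sh := (Finset.mem_erase.mp hu).1
          rw [hα', Function.update_of_ne hne]
          simp
        rw [Finset.prod_congr rfl h2]
        have h3 : ((α' sh : ℕ)) = (α sh : ℕ) + 1 := by
          rw [hα', Function.update_self]
        rw [h3, pow_succ', mul_assoc]
      rw [h1, mul_assoc]
    | zero => rw [mul_zero]; exact Submodule.zero_mem _
    | add a b ha hb iha ihb => rw [mul_add]; exact Submodule.add_mem _ iha ihb
    | smul c a ha iha => rw [mul_smul_comm]; exact Submodule.smul_mem _ c iha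
  have claim : ∀ N (ν : ι →₀ ℕ), (∑ x, ν x) = N → ∀ d, N ≤ d →
      (monomial ν 1 : B) ∈ W d := by
    intro N
    induction N using Nat.strong_induction_on with
    | _ N IH =>
      intro ν hν d hd
      by_cases hall : ∀ u, ν u < p
      · simp only [hW]
        refine Submodule.subset_span ⟨((fun _ => 0), fun u => ⟨ν u, hall u⟩), ?_⟩
        simp only [hΦ]
        simp [Finsupp.equivFunOnFinite_symm_coe]
      · push_neg at hall
        obtain ⟨x₀, hx₀⟩ := hall
        have hpN : p ≤ N := by
          calc p ≤ ν x₀ := hx₀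
          _ ≤ ∑ u, ν u := Finset.single_le_sum (fun u _ => Nat.zero_le _) (Finset.mem_univ x₀)
          _ = N := hν
        set ν' : ι →₀ ℕ := ν - Finsupp.single x₀ p with hν'
        have hadd : Finsupp.single x₀ p + ν' = ν := by
          ext u
          rw [Finsupp.add_apply, hν', Finsupp.tsub_apply]
          rcases eq_or_ne u x₀ with rfl | hne
          · simp only [Finsupp.single_eq_same]
            omega
          · simp [Finsupp.single_apply, hne.symm]
        have hν'sum : (∑ u, ν' u) = N - p := by
          have h1 : (∑ u, (Finsupp.single x₀ p) u) = p := by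
            simp [Finsupp.single_apply]
          have h2 := congrArg (fun w : ι →₀ ℕ => ∑ u, w u) hadd
          simp only [Finsupp.add_apply, Finset.sum_add_distrib] at h2
          rw [hν] at h2
          omega
        have hmono : (monomial ν 1 : B) = (X x₀ : B) ^ p * monomial ν' 1 := by
          rw [X_pow_eq_monomial, monomial_mul, one_mul, hadd]
        rw [hmono, key x₀, Finset.sum_mul]
        apply Submodule.sum_mem
        intro s hsG
        rw [mul_assoc]
        have hU' : U x₀ s * (monomial ν' 1 : B) =
            ∑ g ∈ Finset.univ.filter (fun g => s * PP (p-i) g = π x₀ ^ p),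
              monomial ((∑ j, Finsupp.single (g j) 1) + ν') 1 := by
          rw [hU]
          simp only
          rw [Finset.sum_mul]
          refine Finset.sum_congr rfl fun g _ => ?_
          rw [hMM]
          simp only
          rw [prodX_monomial, monomial_mul, one_mul]
        rw [hU', Finset.mul_sum]
        apply Submodule.sum_mem
        intro g hg
        have hdeg : (∑ u, (((∑ j, Finsupp.single (g j) 1) + ν' : ι →₀ ℕ)) u) = N - i := by
          have hA : (∑ u, (∑ j : Fin (p-i), Finsupp.single (g j) (1:ℕ)) u) = p - i := by
            simp only [Finsupp.finset_sum_apply]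
            rw [Finset.sum_comm]
            simp [Finsupp.single_apply]
          simp only [Finsupp.add_apply, Finset.sum_add_distrib]
          rw [hA, hν'sum]
          omega
        refine hmul s hsG (d - i) d (by omega) _ ?_
        exact IH (N - i) (by omega) _ hdeg (d - i) (by omega)
  -- counting
  by_contra hcon
  push_neg at hcon
  have hG'card : G'.card ≤ Y.card :=
    Finset.card_le_card (fun s hs => (Finset.mem_filter.mp hs).2)
  set n := Fintype.card ι with hn
  have hbound : ∀ t : ℕ, 1 ≤ t → t ^ n ≤ (n * t + 1) ^ G'.card * p ^ n := by
    intro t ht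
    set D := n * t with hD
    haveI : FiniteDimensional K (W D) :=
      FiniteDimensional.span_of_finite K (Set.finite_range (Φ D))
    set fam : (ι → Fin t) → B := fun μ =>
      monomial (Finsupp.equivFunOnFinite.symm fun u => ((μ u : ℕ))) 1 with hfam
    have hmem : ∀ μ, fam μ ∈ W D := by
      intro μ
      refine claim (∑ u, ((Finsupp.equivFunOnFinite.symm fun u => ((μ u : ℕ)) : ι →₀ ℕ) u))
        _ rfl D ?_
      have hle : ∀ u : ι,
          ((Finsupp.equivFunOnFinite.symm fun u => ((μ u : ℕ)) : ι →₀ ℕ) u) ≤ t := by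
        intro u
        have : ((Finsupp.equivFunOnFinite.symm fun u => ((μ u : ℕ)) : ι →₀ ℕ) u) = (μ u : ℕ) := rfl
        rw [this]
        exact le_of_lt (μ u).isLt
      calc (∑ u, ((Finsupp.equivFunOnFinite.symm fun u => ((μ u : ℕ)) : ι →₀ ℕ) u))
          ≤ ∑ _u : ι, t := Finset.sum_le_sum fun u _ => hle u
        _ = n * t := by rw [Finset.sum_const, Finset.card_univ, smul_eq_mul]
    have hinjfam : Function.Injective fun μ : ι → Fin t =>
        (Finsupp.equivFunOnFinite.symm fun u => ((μ u : ℕ)) : ι →₀ ℕ) := by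
      intro a b hab
      funext u
      have h := congrArg (fun w : ι →₀ ℕ => w u) hab
      simp only at h
      exact Fin.val_injective h
    have li : LinearIndependent K fam := by
      have h := ((MvPolynomial.basisMonomials ι K).linearIndependent).comp _ hinjfam
      have hfe : fam = (⇑(MvPolynomial.basisMonomials ι K)) ∘
          (fun μ : ι → Fin t => (Finsupp.equivFunOnFinite.symm fun u => ((μ u : ℕ)) : ι →₀ ℕ)) := by
        funext μ
        simp [hfam, MvPolynomial.coe_basisMonomials]
      rw [hfe]
      exact h
    set fam' : (ι → Fin t) → (W D) := fun μ => ⟨fam μ, hmem μ⟩ with hfam'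
    have li' : LinearIndependent K fam' := by
      apply LinearIndependent.of_comp ((W D).subtype)
      convert li using 1
      rfl
    have c1 : Fintype.card (ι → Fin t) ≤ Module.finrank K (W D) :=
      li'.fintype_card_le_finrank
    have c2 : Module.finrank K (W D) ≤
        Fintype.card (({u // u ∈ G'} → Fin (D+1)) × (ι → Fin p)) := by
      have h := finrank_range_le_card (R := K) (Φ D)
      simp only [Set.finrank] at h
      simpa only [hW] using h
    have c3 : Fintype.card (ι → Fin t) = t ^ n := by
      rw [Fintype.card_fun, Fintype.card_fin, hn]
    have c4 : Fintype.card (({u // u ∈ G'} → Fin (D+1)) × (ι → Fin p))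
        = (D+1) ^ G'.card * p ^ n := by
      rw [Fintype.card_prod, Fintype.card_fun, Fintype.card_fun, Fintype.card_fin,
        Fintype.card_fin, Fintype.card_coe, hn]
    calc t ^ n = Fintype.card (ι → Fin t) := c3.symm
      _ ≤ Module.finrank K (W D) := c1
      _ ≤ Fintype.card (({u // u ∈ G'} → Fin (D+1)) × (ι → Fin p)) := c2
      _ = (n * t + 1) ^ G'.card * p ^ n := by rw [c4, hD]
  have harith : ∀ t : ℕ, 1 ≤ t → t ≤ (n+1) ^ n * p ^ n := by
    intro t ht
    have h1 := hbound t ht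
    have hm : G'.card ≤ n - 1 := by omega
    have hbase : n * t + 1 ≤ (n+1) * t := by nlinarith
    have h2 : (n * t + 1) ^ G'.card ≤ ((n+1) * t) ^ (n-1) :=
      le_trans (Nat.pow_le_pow_left hbase _) (Nat.pow_le_pow_right (by positivity) hm)
    have h3 : t ^ n ≤ ((n+1) * t) ^ (n-1) * p ^ n :=
      le_trans h1 (Nat.mul_le_mul_right _ h2)
    have h4 : t ^ n = t ^ (n-1) * t := by
      conv_lhs => rw [show n = (n-1) + 1 by omega]
      rw [pow_succ]
    have h5 : ((n+1) * t) ^ (n-1) * p ^ n = t ^ (n-1) * ((n+1) ^ (n-1) * p ^ n) := by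
      rw [mul_pow]; ring
    rw [h4, h5] at h3
    have h6 : t ≤ (n+1) ^ (n-1) * p ^ n :=
      Nat.le_of_mul_le_mul_left h3 (by positivity)
    exact le_trans h6 (Nat.mul_le_mul_right _ (Nat.pow_le_pow_right (by omega) (by omega)))
  have := harith ((n+1) ^ n * p ^ n + 1) (by omega)
  omega

end Aux

theorem stmt_12 {S : Type*} [SemigroupWithZero S] (hcomm : ∀ a b : S, a * b = b * a)
    (p : ℕ) (hp : p.Prime) (X : Set S) (hX : X.Finite)
    (hinj : Set.InjOn (fun x => pw x p) X)
    (hnz : ∀ x ∈ X, x ≠ 0 → pw x p ≠ 0) :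
    ∀ i, 1 ≤ i → i ≤ p → (X \ {0}).ncard ≤ (pw X i \ {0}).ncard := by
  classical
  have hpwfin : ∀ k, (pw X k).Finite := by
    intro k
    induction k using Nat.strong_induction_on with
    | _ k IH =>
      match k with
      | 0 => exact hX
      | 1 => exact hX
      | (n+2) => exact Set.Finite.mul hX (IH (n+1) (by omega))
  have hpwmem : ∀ (x : S), x ∈ X → ∀ k, pw x k ∈ pw X k := by
    intro x hx k
    induction k using Nat.strong_induction_on with
    | _ k IH =>
      match k with
      | 0 => exact hx
      | 1 => exact hx
      | (n+2) => exact Set.mul_mem_mul hx (IH (n+1) (by omega))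
  intro i hi1 hi2
  rcases eq_or_lt_of_le hi2 with rfl | hilt
  · -- the case i = p : direct injection x ↦ pw x p
    refine Set.ncard_le_ncard_of_injOn (fun x => pw x i) ?_ ?_ ((hpwfin i).diff)
    · rintro a ⟨haX, ha0⟩
      exact ⟨hpwmem a haX i, hnz a haX ha0⟩
    · exact hinj.mono Set.diff_subset
  -- main case 1 ≤ i < p
  letI : CommMonoid (WithOne S) :=
    { (inferInstance : Monoid (WithOne S)) with
      mul_comm := by
        intro a b
        refine WithOne.cases_on a ?_ fun a' => ?_
        · rw [one_mul, mul_one]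
        · refine WithOne.cases_on b ?_ fun b' => ?_
          · rw [one_mul, mul_one]
          · rw [← WithOne.coe_mul, ← WithOne.coe_mul, hcomm] }
  have hcoe_pw : ∀ (a : S) (k : ℕ),
      ((pw a (k+1) : S) : WithOne S) = (a : WithOne S)^(k+1) := by
    intro a k
    induction k with
    | zero => rw [pow_one]; rfl
    | succ k ih =>
      rw [show pw a (k+2) = a * pw a (k+1) from rfl, WithOne.coe_mul, ih]
      exact (pow_succ' _ _).symm
  have hcoe_pw' : ∀ (a : S) (k : ℕ), 1 ≤ k →
      ((pw a k : S) : WithOne S) = (a : WithOne S)^k := by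
    intro a k hk
    obtain ⟨k', rfl⟩ : ∃ k', k = k'+1 := ⟨k-1, by omega⟩
    exact hcoe_pw a k'
  have hprodcoe : ∀ (k : ℕ) (f : Fin (k+1) → S), (∀ j, f j ∈ X) →
      ∃ σ ∈ pw X (k+1), (σ : WithOne S) = ∏ j, ((f j : S) : WithOne S) := by
    intro k
    induction k with
    | zero =>
      intro f hf
      refine ⟨f 0, hf 0, ?_⟩
      rw [Fin.prod_univ_one]
    | succ k ih =>
      intro f hf
      obtain ⟨σ, hσ, hcoe⟩ := ih (fun j => f j.succ) (fun j => hf _)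
      refine ⟨f 0 * σ, Set.mul_mem_mul (hf 0) hσ, ?_⟩
      rw [WithOne.coe_mul, hcoe]
      conv_rhs => rw [Fin.prod_univ_succ]
  have hprodcoe' : ∀ (k : ℕ), 1 ≤ k → ∀ (f : Fin k → S), (∀ j, f j ∈ X) →
      ∃ σ ∈ pw X k, (σ : WithOne S) = ∏ j, ((f j : S) : WithOne S) := by
    intro k hk
    obtain ⟨k', rfl⟩ : ∃ k', k = k'+1 := ⟨k-1, by omega⟩
    exact hprodcoe k'
  have hEfin : (X \ {0} : Set S).Finite := hX.diff
  set Efin : Finset S := hEfin.toFinset with hEfin'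
  have hYfin : (pw X i \ {0} : Set S).Finite := (hpwfin i).diff
  set Yfin : Finset S := hYfin.toFinset with hYfin'
  set YM : Finset (WithOne S) := Yfin.image (fun a : S => (a : WithOne S)) with hYM
  have hmemE : ∀ a : {a // a ∈ Efin}, (a : S) ∈ X ∧ (a : S) ≠ 0 := by
    intro a
    have := hEfin.mem_toFinset.mp a.2
    exact ⟨this.1, this.2⟩
  have hcore := core_lemma (M := WithOne S) (ι := {a // a ∈ Efin}) p i hp hi1 hilt
    (fun a => ((a : S) : WithOne S))
    (by
      intro a b hab
      rw [← hcoe_pw' _ p hp.one_lt.le, ← hcoe_pw' _ p hp.one_lt.le] at hab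
      have h2 := WithOne.coe_inj.mp hab
      exact Subtype.ext (hinj (hmemE a).1 (hmemE b).1 h2))
    YM
    (by
      intro f x g heq
      obtain ⟨σ, hσ, hcs⟩ := hprodcoe' i hi1 (fun j => (f j : S)) (fun j => (hmemE (f j)).1)
      obtain ⟨τ, hτ, hct⟩ := hprodcoe' (p - i) (by omega) (fun j => (g j : S))
        (fun j => (hmemE (g j)).1)
      rw [← hcs, ← hct, ← hcoe_pw' _ p hp.one_lt.le, ← WithOne.coe_mul] at heq
      have hστ : σ * τ = pw (x : S) p := WithOne.coe_inj.mp heq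
      have hσ0 : σ ≠ 0 := by
        intro h0
        rw [h0, zero_mul] at hστ
        exact hnz (x : S) (hmemE x).1 (hmemE x).2 hστ.symm
      rw [← hcs]
      exact Finset.mem_image_of_mem _ (hYfin.mem_toFinset.mpr ⟨hσ, hσ0⟩))
  have h1 : (X \ {0} : Set S).ncard = Fintype.card {a // a ∈ Efin} := by
    rw [Set.ncard_eq_toFinset_card _ hEfin, Fintype.card_coe]
  have h2 : YM.card = (pw X i \ {0} : Set S).ncard := by
    rw [hYM, Finset.card_image_of_injective _ (fun a b => WithOne.coe_inj.mp),
      Set.ncard_eq_toFinset_card _ hYfin]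
  rw [h1, ← h2]
  exact hcore
end

section
/- For any prime p > 2 there exists a commutative semigroup S with zero and a subset X ⊆ S with card(X^p \ {0}) = card(X \ {0}), but such that for all i with 1 < i < p, card(X^i \ {0}) < card(X \ {0}). -/
open Pointwise

/-- A witness for Statement 14: a commutative semigroup $S$ with zero and a finite subset
$X$ with $\mathrm{card}(X^p\setminus\{0\}) = \mathrm{card}(X\setminus\{0\})$ but
$\mathrm{card}(X^i\setminus\{0\}) < \mathrm{card}(X\setminus\{0\})$ for $1<i<p$. -/
structure Stmt14Witness (p : ℕ) where
  S : Type
  [inst : SemigroupWithZero S]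
  comm : ∀ a b : S, a * b = b * a
  X : Set S
  Xfin : X.Finite
  card_eq : (pw X p \ {0}).ncard = (X \ {0}).ncard
  card_lt : ∀ i, 1 < i → i < p → (pw X i \ {0}).ncard < (X \ {0}).ncard

/-! ### A concrete semigroup witness -/

abbrev S14 (n : ℕ) := Option ((ℕ × ℕ) ⊕ Fin n)

def mul14 {n : ℕ} : S14 n → S14 n → S14 n
  | some (Sum.inl a), some (Sum.inl b) => some (Sum.inl (a.1 + b.1, a.2 + b.2))
  | _, _ => none

instance instS14 (n : ℕ) : SemigroupWithZero (S14 n) where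
  mul := mul14
  zero := none
  mul_assoc a b c := by
    show mul14 (mul14 a b) c = mul14 a (mul14 b c)
    rcases a with _ | (a | a) <;> rcases b with _ | (b | b) <;> rcases c with _ | (c | c) <;>
      simp [mul14] <;> omega
  zero_mul a := by rcases a with _ | (a | a) <;> rfl
  mul_zero a := by rcases a with _ | (a | a) <;> rfl

lemma comm14 {n : ℕ} (a b : S14 n) : a * b = b * a := by
  show mul14 a b = mul14 b a
  rcases a with _ | (a | a) <;> rcases b with _ | (b | b) <;> simp [mul14] <;> omega

@[simp] lemma mul_inl_inl {n : ℕ} (a b : ℕ × ℕ) :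
    (some (Sum.inl a) * some (Sum.inl b) : S14 n) = some (Sum.inl (a.1 + b.1, a.2 + b.2)) := rfl

@[simp] lemma mul_inr_left {n : ℕ} (j : Fin n) (a : S14 n) :
    (some (Sum.inr j) * a : S14 n) = 0 := by
  rcases a with _ | (a | a) <;> rfl

@[simp] lemma mul_none_right {n : ℕ} (a : S14 n) : (a * (0 : S14 n)) = 0 := mul_zero a

lemma zero14 {n : ℕ} : (0 : S14 n) = none := rfl

/-- the generating set -/
def X14 (n : ℕ) : Set (S14 n) :=
  insert (some (Sum.inl (1, 0))) (insert (some (Sum.inl (0, 1)))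
    (Set.range fun j : Fin n => some (Sum.inr j)))

/-- the set of nonzero monomials of degree `i` -/
def M14 (n i : ℕ) : Set (S14 n) :=
  (fun ab : ℕ × ℕ => (some (Sum.inl ab) : S14 n)) '' {ab | ab.1 + ab.2 = i}

lemma key14 {n : ℕ} (hn : 0 < n) (i : ℕ) (A : Set (S14 n))
    (h1 : M14 n i ⊆ A)
    (h2 : A ⊆ M14 n i ∪ {0} ∪ Set.range fun j : Fin n => some (Sum.inr j)) :
    X14 n * A = M14 n (i + 1) ∪ {0} := by
  ext c
  constructor
  · rintro ⟨x, hx, y, hy, rfl⟩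
    rcases h2 hy with ((⟨⟨a, b⟩, hab, rfl⟩) | hy0) | ⟨j, rfl⟩
    · simp only [X14, Set.mem_insert_iff, Set.mem_range] at hx
      rcases hx with rfl | rfl | ⟨j, rfl⟩
      · left
        exact ⟨(1 + a, b), by simp at hab ⊢; omega, by simp⟩
      · left
        exact ⟨(0 + a, 1 + b), by simp at hab ⊢; omega, by simp⟩
      · right; simp
    · simp only [Set.mem_singleton_iff] at hy0
      subst hy0; right; simp
    · right
      rcases x with _ | (x | x) <;> simp [zero14]
      · rfl
      · rfl
  · rintro ((⟨⟨a, b⟩, hab, rfl⟩) | hc0)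
    · simp only [Set.mem_setOf_eq] at hab
      rcases Nat.eq_zero_or_pos a with rfl | ha
      · refine ⟨some (Sum.inl (0, 1)), by simp [X14], some (Sum.inl (0, b - 1)), h1 ⟨(0, b - 1), by simp; omega, rfl⟩, ?_⟩
        simp; omega
      · refine ⟨some (Sum.inl (1, 0)), by simp [X14], some (Sum.inl (a - 1, b)), h1 ⟨(a - 1, b), by simp; omega, rfl⟩, ?_⟩
        simp; omega
    · simp only [Set.mem_singleton_iff] at hc0
      subst hc0
      exact ⟨some (Sum.inr ⟨0, hn⟩), by simp [X14], some (Sum.inl (i, 0)),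
        h1 ⟨(i, 0), by simp, rfl⟩, by simp⟩

lemma M14_subset_X {n : ℕ} : M14 n 1 ⊆ X14 n := by
  rintro _ ⟨⟨a, b⟩, hab, rfl⟩
  simp only [Set.mem_setOf_eq] at hab
  rcases Nat.eq_zero_or_pos a with rfl | ha
  · have : b = 1 := by omega
    subst this; simp [X14]
  · have : a = 1 ∧ b = 0 := by omega
    obtain ⟨rfl, rfl⟩ := this; simp [X14]

lemma X_subset {n : ℕ} :
    X14 n ⊆ M14 n 1 ∪ {0} ∪ Set.range fun j : Fin n => some (Sum.inr j) := by
  rintro x hx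
  simp only [X14, Set.mem_insert_iff, Set.mem_range] at hx
  rcases hx with rfl | rfl | ⟨j, rfl⟩
  · exact Or.inl (Or.inl ⟨(1, 0), by simp, rfl⟩)
  · exact Or.inl (Or.inl ⟨(0, 1), by simp, rfl⟩)
  · exact Or.inr ⟨j, rfl⟩

lemma pow14 {n : ℕ} (hn : 0 < n) : ∀ k, pw (X14 n) (k + 2) = M14 n (k + 2) ∪ {0} := by
  intro k
  induction k with
  | zero =>
    show X14 n * pw (X14 n) 1 = _
    show X14 n * X14 n = _
    exact key14 hn 1 _ M14_subset_X X_subset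
  | succ k ih =>
    show X14 n * pw (X14 n) (k + 2) = _
    rw [ih]
    exact key14 hn (k + 2) _ Set.subset_union_left Set.subset_union_left

lemma M14_ncard {n i : ℕ} : (M14 n i).ncard = i + 1 := by
  have hinj : Function.Injective (fun ab : ℕ × ℕ => (some (Sum.inl ab) : S14 n)) := by
    intro a b h; simpa using h
  have hset : {ab : ℕ × ℕ | ab.1 + ab.2 = i} = (fun a => (a, i - a)) '' Set.Iic i := by
    ext ⟨a, b⟩
    simp only [Set.mem_setOf_eq, Set.mem_image, Set.mem_Iic, Prod.mk.injEq]
    constructor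
    · rintro h; exact ⟨a, by omega, rfl, by omega⟩
    · rintro ⟨c, hc, rfl, rfl⟩; omega
  rw [M14, Set.ncard_image_of_injective _ hinj, hset,
    Set.ncard_image_of_injective _ (fun a b h => (Prod.ext_iff.mp h).1)]
  rw [← Finset.coe_Iic, Set.ncard_coe_finset, Nat.card_Iic]

lemma X14_ncard {n : ℕ} : (X14 n).ncard = n + 2 := by
  have hr : (Set.range fun j : Fin n => (some (Sum.inr j) : S14 n)).ncard = n := by
    rw [← Set.image_univ, Set.ncard_image_of_injective _ (fun a b h => by simpa using h),
      Set.ncard_univ, Nat.card_eq_fintype_card, Fintype.card_fin]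
  have hfin : (Set.range fun j : Fin n => (some (Sum.inr j) : S14 n)).Finite :=
    Set.finite_range _
  rw [X14, Set.ncard_insert_of_notMem (by simp) ((hfin.insert _)),
    Set.ncard_insert_of_notMem (by simp) hfin, hr]

lemma X14_finite {n : ℕ} : (X14 n).Finite :=
  ((Set.finite_range _).insert _).insert _

lemma zero_notMem_X {n : ℕ} : (0 : S14 n) ∉ X14 n := by
  simp [X14, zero14]

lemma zero_notMem_M {n i : ℕ} : (0 : S14 n) ∉ M14 n i := by
  rintro ⟨ab, -, h⟩
  simp [zero14] at h

lemma pow_ncard {n : ℕ} (hn : 0 < n) (k : ℕ) :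
    (pw (X14 n) (k + 2) \ {0}).ncard = k + 3 := by
  rw [pow14 hn k, Set.union_diff_right, Set.diff_singleton_eq_self zero_notMem_M, M14_ncard]

theorem stmt_14 (p : ℕ) (hp : p.Prime) (hp2 : 2 < p) : Nonempty (Stmt14Witness p) := by
  refine ⟨⟨S14 (p - 1), comm14, X14 (p - 1), X14_finite, ?_, ?_⟩⟩
  · obtain ⟨k, rfl⟩ : ∃ k, p = k + 2 := ⟨p - 2, by omega⟩
    rw [pow_ncard (by omega) k, Set.diff_singleton_eq_self zero_notMem_X, X14_ncard]
    omega
  · intro i h1 h2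
    obtain ⟨k, rfl⟩ : ∃ k, i = k + 2 := ⟨i - 2, by omega⟩
    rw [pow_ncard (by omega) k, Set.diff_singleton_eq_self zero_notMem_X, X14_ncard]
    omega
end

section
/- For every positive integer d there exists a graded, nilpotent, commutative, nonassociative algebra R = R_1 ⊕ R_2 ⊕ R_3 over the real numbers, generated by R_1, with dim R_1 = d, dim R_2 = 1, dim R_3 = d, such that the cubing map r ↦ r(rr) restricts to a bijection from R_1 onto R_3. Hence, setting R^(3) = {r(rr) : r ∈ R} = R_3, one has dim R^(3)/dim R = d/(2d+1), which exceeds 1/3 whenever d > 1. -/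
open Pointwise

/-- A witness for Statement 18: a graded, nilpotent, commutative, nonassociative real
algebra $R = R_1 \oplus R_2 \oplus R_3$ generated by $R_1$, with dimensions $d, 1, d$,
on which cubing $r \mapsto r(rr)$ is a bijection from $R_1$ onto $R_3$, and whose set of
cubes is exactly $R_3$. -/
structure Stmt18Witness (d : ℕ) where
  R : Type
  [ring : NonUnitalNonAssocCommRing R]
  [mod : Module ℝ R]
  [scc : SMulCommClass ℝ R R]
  [ist : IsScalarTower ℝ R R]
  grading : ℕ → Submodule ℝ R
  mul_le : ∀ i j, grading i * grading j ≤ grading (i + j)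
  internal : DirectSum.IsInternal grading
  zero_bot : grading 0 = ⊥
  high_bot : ∀ i, 4 ≤ i → grading i = ⊥
  gen : NonUnitalAlgebra.adjoin ℝ ((grading 1 : Submodule ℝ R) : Set R) = ⊤
  dim1 : Module.finrank ℝ (grading 1) = d
  dim2 : Module.finrank ℝ (grading 2) = 1
  dim3 : Module.finrank ℝ (grading 3) = d
  dimR : Module.finrank ℝ R = 2 * d + 1
  nilpotent : ∀ a b c e : R,
    (a * b) * (c * e) = 0 ∧ a * (b * (c * e)) = 0 ∧ a * ((b * c) * e) = 0 ∧
      ((a * b) * c) * e = 0 ∧ (a * (b * c)) * e = 0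
  cube_bij : Set.BijOn (fun r : R => r * (r * r)) (grading 1) (grading 3)
  cube_range : (Set.range fun r : R => r * (r * r)) = ((grading 3 : Submodule ℝ R) : Set R)

open RealInnerProductSpace

namespace S18

variable {d : ℕ}

/-- The underlying type: W ⊕ ℝ ⊕ W with W = ℝ^d. -/
@[ext]
structure Rd (d : ℕ) : Type where
  x : EuclideanSpace ℝ (Fin d)
  y : ℝ
  z : EuclideanSpace ℝ (Fin d)


noncomputable instance : Zero (Rd d) := ⟨⟨0, 0, 0⟩⟩
noncomputable instance : Add (Rd d) := ⟨fun p q => ⟨p.x + q.x, p.y + q.y, p.z + q.z⟩⟩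
noncomputable instance : Neg (Rd d) := ⟨fun p => ⟨-p.x, -p.y, -p.z⟩⟩
noncomputable instance : SMul ℝ (Rd d) := ⟨fun r p => ⟨r • p.x, r * p.y, r • p.z⟩⟩
noncomputable instance : Mul (Rd d) :=
  ⟨fun p q => ⟨0, ⟪p.x, q.x⟫, p.y • q.x + q.y • p.x⟩⟩

@[simp] lemma zero_x : (0 : Rd d).x = 0 := rfl
@[simp] lemma zero_y : (0 : Rd d).y = 0 := rfl
@[simp] lemma zero_z : (0 : Rd d).z = 0 := rfl
@[simp] lemma add_x (p q : Rd d) : (p + q).x = p.x + q.x := rfl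
@[simp] lemma add_y (p q : Rd d) : (p + q).y = p.y + q.y := rfl
@[simp] lemma add_z (p q : Rd d) : (p + q).z = p.z + q.z := rfl
@[simp] lemma neg_x (p : Rd d) : (-p).x = -p.x := rfl
@[simp] lemma neg_y (p : Rd d) : (-p).y = -p.y := rfl
@[simp] lemma neg_z (p : Rd d) : (-p).z = -p.z := rfl
@[simp] lemma smul_x (r : ℝ) (p : Rd d) : (r • p).x = r • p.x := rfl
@[simp] lemma smul_y (r : ℝ) (p : Rd d) : (r • p).y = r * p.y := rfl
@[simp] lemma smul_z (r : ℝ) (p : Rd d) : (r • p).z = r • p.z := rfl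
@[simp] lemma mul_x (p q : Rd d) : (p * q).x = 0 := rfl
@[simp] lemma mul_y (p q : Rd d) : (p * q).y = ⟪p.x, q.x⟫ := rfl
@[simp] lemma mul_z (p q : Rd d) : (p * q).z = p.y • q.x + q.y • p.x := rfl

noncomputable instance : AddCommGroup (Rd d) where
  add_assoc p q r := by apply Rd.ext <;> simp only [add_x, add_y, add_z] <;> exact add_assoc _ _ _
  zero_add p := by apply Rd.ext <;> simp only [add_x, add_y, add_z, zero_x, zero_y, zero_z] <;> exact zero_add _
  add_zero p := by apply Rd.ext <;> simp only [add_x, add_y, add_z, zero_x, zero_y, zero_z] <;> exact add_zero _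
  add_comm p q := by apply Rd.ext <;> simp only [add_x, add_y, add_z] <;> exact add_comm _ _
  neg_add_cancel p := by
    apply Rd.ext <;> simp only [add_x, add_y, add_z, neg_x, neg_y, neg_z, zero_x, zero_y, zero_z]
      <;> exact neg_add_cancel _
  nsmul := nsmulRec
  zsmul := zsmulRec

noncomputable instance : Module ℝ (Rd d) where
  one_smul p := by apply Rd.ext <;> simp only [smul_x, smul_y, smul_z, one_smul, one_mul]
  mul_smul r s p := by
    apply Rd.ext <;> simp only [smul_x, smul_y, smul_z, mul_smul, mul_assoc]
  smul_zero r := by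
    apply Rd.ext <;> simp only [smul_x, smul_y, smul_z, zero_x, zero_y, zero_z, smul_zero, mul_zero]
  smul_add r p q := by
    apply Rd.ext <;> simp only [smul_x, smul_y, smul_z, add_x, add_y, add_z, smul_add, mul_add]
  add_smul r s p := by
    apply Rd.ext <;> simp only [smul_x, smul_y, smul_z, add_x, add_y, add_z, add_smul, add_mul]
  zero_smul p := by
    apply Rd.ext <;> simp only [smul_x, smul_y, smul_z, zero_x, zero_y, zero_z, zero_smul, zero_mul]

noncomputable instance : NonUnitalNonAssocCommRing (Rd d) where
  left_distrib p q r := by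
    apply Rd.ext
    · simp only [mul_x, add_x, add_zero]
    · simp only [mul_y, add_x, add_y, inner_add_right]
    · simp only [mul_z, add_x, add_y, add_z, smul_add, add_smul]; module
  right_distrib p q r := by
    apply Rd.ext
    · simp only [mul_x, add_x, add_zero]
    · simp only [mul_y, add_x, add_y, inner_add_left]
    · simp only [mul_z, add_x, add_y, add_z, smul_add, add_smul]; module
  zero_mul p := by
    apply Rd.ext
    · rfl
    · simp only [mul_y, zero_x, inner_zero_left, zero_y]
    · simp only [mul_z, zero_x, zero_y, zero_smul, smul_zero, add_zero, zero_z]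
  mul_zero p := by
    apply Rd.ext
    · rfl
    · simp only [mul_y, zero_x, inner_zero_right, zero_y]
    · simp only [mul_z, zero_x, zero_y, zero_smul, smul_zero, zero_add, zero_z]
  mul_comm p q := by
    apply Rd.ext
    · rfl
    · exact real_inner_comm _ _
    · simp only [mul_z]; abel

noncomputable instance : SMulCommClass ℝ (Rd d) (Rd d) where
  smul_comm r p q := by
    show r • (p * q) = p * (r • q)
    apply Rd.ext
    · simp only [smul_x, mul_x, smul_zero]
    · simp only [smul_y, mul_y, smul_x, real_inner_smul_right]
    · simp only [smul_z, mul_z, smul_x, smul_y, smul_add, smul_smul, mul_comm]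

noncomputable instance : IsScalarTower ℝ (Rd d) (Rd d) where
  smul_assoc r p q := by
    show (r • p) * q = r • (p * q)
    apply Rd.ext
    · simp only [smul_x, mul_x, smul_zero]
    · simp only [smul_y, mul_y, smul_x, real_inner_smul_left]
    · simp only [smul_z, mul_z, smul_x, smul_y, smul_add, smul_smul, mul_comm]; abel

/-! ### Grading submodules -/

def G1 (d : ℕ) : Submodule ℝ (Rd d) where
  carrier := {p | p.y = 0 ∧ p.z = 0}
  add_mem' := by rintro p q ⟨h1, h2⟩ ⟨h3, h4⟩; exact ⟨by simp [h1, h3], by simp [h2, h4]⟩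
  zero_mem' := ⟨rfl, rfl⟩
  smul_mem' := by rintro r p ⟨h1, h2⟩; exact ⟨by simp [h1], by simp [h2]⟩

def G2 (d : ℕ) : Submodule ℝ (Rd d) where
  carrier := {p | p.x = 0 ∧ p.z = 0}
  add_mem' := by rintro p q ⟨h1, h2⟩ ⟨h3, h4⟩; exact ⟨by simp [h1, h3], by simp [h2, h4]⟩
  zero_mem' := ⟨rfl, rfl⟩
  smul_mem' := by rintro r p ⟨h1, h2⟩; exact ⟨by simp [h1], by simp [h2]⟩

def G3 (d : ℕ) : Submodule ℝ (Rd d) where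
  carrier := {p | p.x = 0 ∧ p.y = 0}
  add_mem' := by rintro p q ⟨h1, h2⟩ ⟨h3, h4⟩; exact ⟨by simp [h1, h3], by simp [h2, h4]⟩
  zero_mem' := ⟨rfl, rfl⟩
  smul_mem' := by rintro r p ⟨h1, h2⟩; exact ⟨by simp [h1], by simp [h2]⟩

@[simp] lemma mem_G1 {p : Rd d} : p ∈ G1 d ↔ p.y = 0 ∧ p.z = 0 := Iff.rfl
@[simp] lemma mem_G2 {p : Rd d} : p ∈ G2 d ↔ p.x = 0 ∧ p.z = 0 := Iff.rfl
@[simp] lemma mem_G3 {p : Rd d} : p ∈ G3 d ↔ p.x = 0 ∧ p.y = 0 := Iff.rfl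

noncomputable def grading (d : ℕ) : ℕ → Submodule ℝ (Rd d) := fun i =>
  if i = 1 then G1 d else if i = 2 then G2 d else if i = 3 then G3 d else ⊥

@[simp] lemma grading_one : grading d 1 = G1 d := rfl
@[simp] lemma grading_two : grading d 2 = G2 d := rfl
@[simp] lemma grading_three : grading d 3 = G3 d := rfl
lemma grading_other {i : ℕ} (h1 : i ≠ 1) (h2 : i ≠ 2) (h3 : i ≠ 3) :
    grading d i = ⊥ := by simp [grading, h1, h2, h3]

/-! ### Key multiplication lemmas -/

lemma mul_eq_zero_of_right {p q : Rd d} (h1 : q.x = 0) (h2 : q.y = 0) : p * q = 0 := by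
  apply Rd.ext <;> simp [h1, h2]

lemma mul_eq_zero_of_left {p q : Rd d} (h1 : p.x = 0) (h2 : p.y = 0) : p * q = 0 := by
  apply Rd.ext <;> simp [h1, h2]

lemma cube_eq (p : Rd d) : p * (p * p) = ⟨0, 0, ⟪p.x, p.x⟫ • p.x⟩ := by
  apply Rd.ext <;> simp

/-! ### mul_le -/

lemma mul_le_aux (i j : ℕ) : ∀ p ∈ grading d i, ∀ q ∈ grading d j,
    p * q ∈ grading d (i + j) := by
  intro p hp q hq
  by_cases hi1 : i = 1
  · subst hi1
    obtain ⟨hpy, hpz⟩ := mem_G1.1 hp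
    by_cases hj1 : j = 1
    · subst hj1
      show p * q ∈ G2 d
      obtain ⟨hqy, hqz⟩ := mem_G1.1 hq
      exact mem_G2.2 ⟨rfl, by simp [hpy, hqy]⟩
    · by_cases hj2 : j = 2
      · subst hj2
        show p * q ∈ G3 d
        obtain ⟨hqx, hqz⟩ := mem_G2.1 hq
        exact mem_G3.2 ⟨rfl, by simp [hqx]⟩
      · by_cases hj3 : j = 3
        · subst hj3
          obtain ⟨hqx, hqy⟩ := mem_G3.1 hq
          rw [mul_eq_zero_of_right hqx hqy]
          exact zero_mem _
        · rw [grading_other hj1 hj2 hj3, Submodule.mem_bot] at hq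
          rw [hq, mul_zero]
          exact zero_mem _
  · by_cases hi2 : i = 2
    · subst hi2
      obtain ⟨hpx, hpz⟩ := mem_G2.1 hp
      by_cases hj1 : j = 1
      · subst hj1
        show p * q ∈ G3 d
        exact mem_G3.2 ⟨rfl, by simp [hpx]⟩
      · by_cases hj2 : j = 2
        · subst hj2
          obtain ⟨hqx, hqz⟩ := mem_G2.1 hq
          have : p * q = 0 := by apply Rd.ext <;> simp [hpx, hqx]
          rw [this]; exact zero_mem _
        · by_cases hj3 : j = 3
          · subst hj3
            obtain ⟨hqx, hqy⟩ := mem_G3.1 hq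
            rw [mul_eq_zero_of_right hqx hqy]; exact zero_mem _
          · rw [grading_other hj1 hj2 hj3, Submodule.mem_bot] at hq
            rw [hq, mul_zero]; exact zero_mem _
    · by_cases hi3 : i = 3
      · subst hi3
        obtain ⟨hpx, hpy⟩ := mem_G3.1 hp
        rw [mul_eq_zero_of_left hpx hpy]; exact zero_mem _
      · rw [grading_other hi1 hi2 hi3, Submodule.mem_bot] at hp
        rw [hp, zero_mul]; exact zero_mem _

lemma mul_le (i j : ℕ) : grading d i * grading d j ≤ grading d (i + j) := by
  refine Submodule.span_le.mpr ?_
  exact Set.image2_subset_iff.mpr fun p hp q hq => mul_le_aux i j p hp q hq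

/-! ### Internality -/

def C1 (d : ℕ) : Submodule ℝ (Rd d) where
  carrier := {p | p.x = 0}
  add_mem' := by rintro p q h1 h2; show _ = _; simp_all
  zero_mem' := rfl
  smul_mem' := by rintro r p h; show _ = _; simp_all

def C2 (d : ℕ) : Submodule ℝ (Rd d) where
  carrier := {p | p.y = 0}
  add_mem' := by rintro p q h1 h2; show _ = _; simp_all
  zero_mem' := rfl
  smul_mem' := by rintro r p h; show _ = _; simp_all

def C3 (d : ℕ) : Submodule ℝ (Rd d) where
  carrier := {p | p.z = 0}
  add_mem' := by rintro p q h1 h2; show _ = _; simp_all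
  zero_mem' := rfl
  smul_mem' := by rintro r p h; show _ = _; simp_all

lemma indep : iSupIndep (grading d) := by
  intro i
  by_cases hi1 : i = 1
  · subst hi1
    have hle : (⨆ (j : ℕ) (_ : j ≠ 1), grading d j) ≤ C1 d := by
      refine iSup_le fun j => iSup_le fun hj => ?_
      intro p hp
      by_cases hj2 : j = 2
      · subst hj2; exact (mem_G2.1 hp).1
      · by_cases hj3 : j = 3
        · subst hj3; exact (mem_G3.1 hp).1
        · rw [grading_other hj hj2 hj3, Submodule.mem_bot] at hp
          rw [hp]; exact rfl
    refine Disjoint.mono_right hle (Submodule.disjoint_def.mpr fun p hp hp' => ?_)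
    obtain ⟨h1, h2⟩ := mem_G1.1 hp
    apply Rd.ext <;> simp_all
    exact hp'
  · by_cases hi2 : i = 2
    · subst hi2
      have hle : (⨆ (j : ℕ) (_ : j ≠ 2), grading d j) ≤ C2 d := by
        refine iSup_le fun j => iSup_le fun hj => ?_
        intro p hp
        by_cases hj1 : j = 1
        · subst hj1; exact (mem_G1.1 hp).1
        · by_cases hj3 : j = 3
          · subst hj3; exact (mem_G3.1 hp).2
          · rw [grading_other hj1 hj hj3, Submodule.mem_bot] at hp
            rw [hp]; exact rfl
      refine Disjoint.mono_right hle (Submodule.disjoint_def.mpr fun p hp hp' => ?_)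
      obtain ⟨h1, h2⟩ := mem_G2.1 hp
      apply Rd.ext <;> simp_all
      exact hp'
    · by_cases hi3 : i = 3
      · subst hi3
        have hle : (⨆ (j : ℕ) (_ : j ≠ 3), grading d j) ≤ C3 d := by
          refine iSup_le fun j => iSup_le fun hj => ?_
          intro p hp
          by_cases hj1 : j = 1
          · subst hj1; exact (mem_G1.1 hp).2
          · by_cases hj2 : j = 2
            · subst hj2; exact (mem_G2.1 hp).2
            · rw [grading_other hj1 hj2 hj, Submodule.mem_bot] at hp
              rw [hp]; exact rfl
        refine Disjoint.mono_right hle (Submodule.disjoint_def.mpr fun p hp hp' => ?_)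
        obtain ⟨h1, h2⟩ := mem_G3.1 hp
        apply Rd.ext <;> simp_all
        exact hp'
      · rw [grading_other hi1 hi2 hi3]
        exact disjoint_bot_left

lemma sup_eq_top : (⨆ i, grading d i) = ⊤ := by
  rw [eq_top_iff]
  rintro p -
  have hp : p = (⟨p.x, 0, 0⟩ : Rd d) + ⟨0, p.y, 0⟩ + ⟨0, 0, p.z⟩ := by
    apply Rd.ext <;> simp
  rw [hp]
  refine add_mem (add_mem ?_ ?_) ?_
  · exact Submodule.mem_iSup_of_mem 1 (mem_G1.2 ⟨rfl, rfl⟩)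
  · exact Submodule.mem_iSup_of_mem 2 (mem_G2.2 ⟨rfl, rfl⟩)
  · exact Submodule.mem_iSup_of_mem 3 (mem_G3.2 ⟨rfl, rfl⟩)

lemma internal : DirectSum.IsInternal (grading d) :=
  DirectSum.isInternal_submodule_of_iSupIndep_of_iSup_eq_top indep sup_eq_top

/-! ### Dimensions -/

noncomputable def e1 : G1 d ≃ₗ[ℝ] EuclideanSpace ℝ (Fin d) where
  toFun p := (p : Rd d).x
  map_add' p q := rfl
  map_smul' r p := rfl
  invFun v := ⟨⟨v, 0, 0⟩, mem_G1.2 ⟨rfl, rfl⟩⟩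
  left_inv p := by
    ext1
    obtain ⟨h1, h2⟩ := mem_G1.1 p.2
    apply Rd.ext <;> simp [h1, h2]
  right_inv v := rfl

noncomputable def e2 : G2 d ≃ₗ[ℝ] ℝ where
  toFun p := (p : Rd d).y
  map_add' p q := rfl
  map_smul' r p := rfl
  invFun a := ⟨⟨0, a, 0⟩, mem_G2.2 ⟨rfl, rfl⟩⟩
  left_inv p := by
    ext1
    obtain ⟨h1, h2⟩ := mem_G2.1 p.2
    apply Rd.ext <;> simp [h1, h2]
  right_inv v := rfl

noncomputable def e3 : G3 d ≃ₗ[ℝ] EuclideanSpace ℝ (Fin d) where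
  toFun p := (p : Rd d).z
  map_add' p q := rfl
  map_smul' r p := rfl
  invFun v := ⟨⟨0, 0, v⟩, mem_G3.2 ⟨rfl, rfl⟩⟩
  left_inv p := by
    ext1
    obtain ⟨h1, h2⟩ := mem_G3.1 p.2
    apply Rd.ext <;> simp [h1, h2]
  right_inv v := rfl

noncomputable def eR :
    Rd d ≃ₗ[ℝ] (EuclideanSpace ℝ (Fin d)) × ℝ × (EuclideanSpace ℝ (Fin d)) where
  toFun p := (p.x, p.y, p.z)
  map_add' p q := rfl
  map_smul' r p := rfl
  invFun v := ⟨v.1, v.2.1, v.2.2⟩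
  left_inv p := rfl
  right_inv v := rfl

lemma dim1 : Module.finrank ℝ (G1 d) = d := by
  rw [e1.finrank_eq, finrank_euclideanSpace_fin]

lemma dim2 : Module.finrank ℝ (G2 d) = 1 := by
  rw [e2.finrank_eq, Module.finrank_self]

lemma dim3 : Module.finrank ℝ (G3 d) = d := by
  rw [e3.finrank_eq, finrank_euclideanSpace_fin]

lemma dimR : Module.finrank ℝ (Rd d) = 2 * d + 1 := by
  rw [eR.finrank_eq, Module.finrank_prod, Module.finrank_prod,
    finrank_euclideanSpace_fin, Module.finrank_self]
  ring

/-! ### The cube map -/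

lemma f_inj : Function.Injective
    (fun v : EuclideanSpace ℝ (Fin d) => ⟪v, v⟫ • v) := by
  intro u v h
  simp only [real_inner_self_eq_norm_sq] at h
  have hn : ‖u‖ = ‖v‖ := by
    have h3 : ‖u‖ ^ 3 = ‖v‖ ^ 3 := by
      have hthis := congrArg norm h
      rw [norm_smul, norm_smul, Real.norm_eq_abs, Real.norm_eq_abs,
        abs_of_nonneg (sq_nonneg ‖u‖), abs_of_nonneg (sq_nonneg ‖v‖)] at hthis
      calc ‖u‖ ^ 3 = ‖u‖ ^ 2 * ‖u‖ := by ring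
        _ = ‖v‖ ^ 2 * ‖v‖ := hthis
        _ = ‖v‖ ^ 3 := by ring
    exact ((Odd.strictMono_pow (R := ℝ) (by decide)).injective h3)
  rcases eq_or_ne ‖v‖ 0 with h0 | h0
  · rw [norm_eq_zero] at h0
    have hu0 : ‖u‖ = 0 := by rw [hn, h0, norm_zero]
    rw [norm_eq_zero] at hu0
    rw [hu0, h0]
  · rw [hn] at h
    exact smul_right_injective _ (by positivity) h

lemma f_surj : Function.Surjective
    (fun v : EuclideanSpace ℝ (Fin d) => ⟪v, v⟫ • v) := by
  intro w
  rcases eq_or_ne w 0 with rfl | hw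
  · exact ⟨0, by simp⟩
  · have hw0 : 0 < ‖w‖ := norm_pos_iff.mpr hw
    set t : ℝ := ‖w‖ ^ (-(2/3) : ℝ) with ht
    refine ⟨t • w, ?_⟩
    have key : t ^ 3 * ‖w‖ ^ 2 = 1 := by
      rw [ht, ← Real.rpow_natCast (‖w‖ ^ (-(2/3) : ℝ)) 3, ← Real.rpow_natCast ‖w‖ 2,
        ← Real.rpow_mul hw0.le, ← Real.rpow_add hw0]
      norm_num
    show ⟪t • w, t • w⟫ • (t • w) = w
    rw [real_inner_smul_left, real_inner_smul_right, real_inner_self_eq_norm_sq,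
      smul_smul]
    have heq : t * (t * ‖w‖ ^ 2) * t = t ^ 3 * ‖w‖ ^ 2 := by ring
    rw [heq, key, one_smul]

lemma cube_bij : Set.BijOn (fun r : Rd d => r * (r * r)) (G1 d) (G3 d) := by
  refine ⟨?_, ?_, ?_⟩
  · intro p hp
    rw [SetLike.mem_coe]
    show (fun r : Rd d => r * (r * r)) p ∈ (G3 d : Set (Rd d))
    simp only [cube_eq]
    exact mem_G3.2 ⟨rfl, rfl⟩
  · intro p hp q hq h
    simp only [cube_eq] at h
    have hz := congrArg Rd.z h
    simp only at hz
    have hx : p.x = q.x := f_inj hz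
    obtain ⟨h1, h2⟩ := mem_G1.1 hp
    obtain ⟨h3, h4⟩ := mem_G1.1 hq
    apply Rd.ext <;> simp_all
  · intro q hq
    obtain ⟨h1, h2⟩ := mem_G3.1 hq
    obtain ⟨v, hv⟩ := f_surj (d := d) q.z
    refine ⟨⟨v, 0, 0⟩, mem_G1.2 ⟨rfl, rfl⟩, ?_⟩
    show (⟨v, 0, 0⟩ : Rd d) * (⟨v, 0, 0⟩ * ⟨v, 0, 0⟩) = q
    rw [cube_eq]
    apply Rd.ext
    · simp [h1]
    · simp [h2]
    · show (⟪v, v⟫ : ℝ) • v = q.z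
      exact hv

lemma cube_range :
    (Set.range fun r : Rd d => r * (r * r)) = ((G3 d : Submodule ℝ (Rd d)) : Set (Rd d)) := by
  apply Set.Subset.antisymm
  · rintro _ ⟨p, rfl⟩
    simp only [cube_eq]
    exact mem_G3.2 ⟨rfl, rfl⟩
  · intro q hq
    obtain ⟨p, _, hp⟩ := cube_bij.surjOn hq
    exact ⟨p, hp⟩

lemma mul_eq_zero_of_xx {p q : Rd d} (hp : p.x = 0) (hq : q.x = 0) : p * q = 0 := by
  apply Rd.ext <;> simp [hp, hq]

lemma nilp (a b c e : Rd d) :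
    (a * b) * (c * e) = 0 ∧ a * (b * (c * e)) = 0 ∧ a * ((b * c) * e) = 0 ∧
      ((a * b) * c) * e = 0 ∧ (a * (b * c)) * e = 0 := by
  refine ⟨?_, ?_, ?_, ?_, ?_⟩
  · exact mul_eq_zero_of_xx rfl rfl
  · exact mul_eq_zero_of_right rfl (by simp)
  · exact mul_eq_zero_of_right rfl (by simp)
  · exact mul_eq_zero_of_left rfl (by simp)
  · exact mul_eq_zero_of_left rfl (by simp)

/-! ### Generation -/

lemma gen (hd : 1 ≤ d) :
    NonUnitalAlgebra.adjoin ℝ ((G1 d : Submodule ℝ (Rd d)) : Set (Rd d)) = ⊤ := by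
  rw [eq_top_iff]
  rintro p -
  set u : EuclideanSpace ℝ (Fin d) := EuclideanSpace.single (⟨0, hd⟩ : Fin d) 1 with hu
  have huu : ⟪u, u⟫ = (1 : ℝ) := by
    rw [hu, EuclideanSpace.inner_single_left]
    simp
  set e : Rd d := ⟨u, 0, 0⟩ with he
  have hemem : e ∈ NonUnitalAlgebra.adjoin ℝ ((G1 d : Submodule ℝ (Rd d)) : Set (Rd d)) :=
    NonUnitalAlgebra.subset_adjoin ℝ (mem_G1.2 ⟨rfl, rfl⟩)
  have hee : e * e = (⟨0, 1, 0⟩ : Rd d) := by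
    apply Rd.ext <;> simp [he, huu, hu, PiLp.norm_single]
  have h3 : ∀ w : EuclideanSpace ℝ (Fin d),
      (⟨0, 0, w⟩ : Rd d) ∈ NonUnitalAlgebra.adjoin ℝ ((G1 d : Submodule ℝ (Rd d)) : Set (Rd d)) := by
    intro w
    have hw : (⟨0, 0, w⟩ : Rd d) = (e * e) * ⟨w, 0, 0⟩ := by
      rw [hee]; apply Rd.ext <;> simp
    rw [hw]
    exact mul_mem (mul_mem hemem hemem)
      (NonUnitalAlgebra.subset_adjoin ℝ (mem_G1.2 ⟨rfl, rfl⟩))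
  have h2 : (⟨0, p.y, 0⟩ : Rd d) ∈
      NonUnitalAlgebra.adjoin ℝ ((G1 d : Submodule ℝ (Rd d)) : Set (Rd d)) := by
    have : (⟨0, p.y, 0⟩ : Rd d) = p.y • (e * e) := by
      rw [hee]; apply Rd.ext <;> simp
    rw [this]
    exact SMulMemClass.smul_mem _ (mul_mem hemem hemem)
  have h1 : (⟨p.x, 0, 0⟩ : Rd d) ∈
      NonUnitalAlgebra.adjoin ℝ ((G1 d : Submodule ℝ (Rd d)) : Set (Rd d)) :=
    NonUnitalAlgebra.subset_adjoin ℝ (mem_G1.2 ⟨rfl, rfl⟩)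
  have hp : p = (⟨p.x, 0, 0⟩ : Rd d) + ⟨0, p.y, 0⟩ + ⟨0, 0, p.z⟩ := by
    apply Rd.ext <;> simp
  rw [hp]
  exact add_mem (add_mem h1 h2) (h3 p.z)

end S18


theorem stmt_18 (d : ℕ) (hd : 1 ≤ d) :
    Nonempty (Stmt18Witness d) ∧ (1 < d → (1 : ℚ) / 3 < (d : ℚ) / (2 * d + 1)) := by
  constructor
  · exact ⟨{ R := S18.Rd d
             grading := S18.grading d
             mul_le := S18.mul_le
             internal := S18.internal
             zero_bot := S18.grading_other (by norm_num) (by norm_num) (by norm_num)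
             high_bot := fun i hi => S18.grading_other (by omega) (by omega) (by omega)
             gen := S18.gen hd
             dim1 := S18.dim1
             dim2 := S18.dim2
             dim3 := S18.dim3
             dimR := S18.dimR
             nilpotent := S18.nilp
             cube_bij := S18.cube_bij
             cube_range := S18.cube_range }⟩
  · intro h
    have hdq : (1 : ℚ) < d := by exact_mod_cast h
    rw [div_lt_div_iff₀ (by norm_num) (by positivity)]
    linarith
end
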